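/- Let J = Z− and suppose the triangular system x(n+1) = (A11(n) A12(n); 0 A22(n)) x(n) admits an exponential dichotomy on Z−. Suppose further that: (1) the subspace U2 of X2 consisting of all v ∈ X2 for which there exists a bounded sequence (x2(n))_{n∈Z−} in X2 with x2(0) = v and x2(n) = A22(n−1)x2(n−1) for all n ≤ 0 is complemented in X2; and (2) the only bounded sequence (x2(n))_{n∈Z−} in X2 with x2(0) = 0 and x2(n) = A22(n−1)x2(n−1) for all n ≤ 0 is the zero sequence. Then the block system x2(n+1) = A22(n) x2(n) admits an exponential dichotomy on Z−. -/

import Mathlib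

open Real ContinuousLinearMap

noncomputable section

universe u

variable {X : Type u} [NormedAddCommGroup X] [NormedSpace ℝ X]

/-- The cocycle associated with the system `x(n+1) = A(n) x(n)`, as a function of the
number of steps: `cocycleAux A n k = A(n+k-1) ∘ ⋯ ∘ A(n)`. -/
def cocycleAux (A : ℤ → X →L[ℝ] X) (n : ℤ) : ℕ → (X →L[ℝ] X)
  | 0 => ContinuousLinearMap.id ℝ X
  | k + 1 => (A (n + k)).comp (cocycleAux A n k)

/-- The cocycle `Φ(m, n) = A(m-1) ⋯ A(n)` for `m > n`, and `Φ(n, n) = Id`. -/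
def Phi (A : ℤ → X →L[ℝ] X) (m n : ℤ) : X →L[ℝ] X :=
  cocycleAux A n (m - n).toNat

/-- The system `x(n+1) = A(n) x(n)`, `n ∈ J'`, admits an exponential dichotomy on `J`
with respect to the family of (bounded) projections `P(n)`, `n ∈ J`:
there are constants `K, α > 0` such that
(i) `P(n)` are projections, `A(n) P(n) = P(n+1) A(n)` for `n ∈ J'`, and `A(n)` maps
`ker P(n)` bijectively onto `ker P(n+1)` for `n ∈ J'`;
(ii) `‖Φ(m,n) P(n)‖ ≤ K e^{-α (m-n)}` for `m ≥ n` in `J`;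
(iii) `‖Φ(m,n) (Id - P(n))‖ ≤ K e^{-α (n-m)}` for `m ≤ n` in `J`, where
`Φ(m,n) : ker P(n) → ker P(m)` denotes the inverse of `Φ(n,m)` restricted to `ker P(m)`;
the latter is phrased as: whenever `x ∈ ker P(m)` and `Φ(n,m) x = (Id - P(n)) y`,
then `‖x‖ ≤ K e^{-α (n-m)} ‖y‖`. -/
def IsExpDichotomy (J J' : Set ℤ) (A P : ℤ → X →L[ℝ] X) : Prop :=
  ∃ K α : ℝ, 0 < K ∧ 0 < α ∧
    (∀ n ∈ J, (P n).comp (P n) = P n) ∧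
    (∀ n ∈ J', (A n).comp (P n) = (P (n + 1)).comp (A n)) ∧
    (∀ n ∈ J', Set.BijOn (A n) {x : X | P n x = 0} {x : X | P (n + 1) x = 0}) ∧
    (∀ m n : ℤ, m ∈ J → n ∈ J → n ≤ m →
      ‖(Phi A m n).comp (P n)‖ ≤ K * Real.exp (-α * ((m : ℝ) - (n : ℝ)))) ∧
    (∀ m n : ℤ, m ∈ J → n ∈ J → m ≤ n → ∀ x y : X,
      P m x = 0 → Phi A n m x = y - P n y →
      ‖x‖ ≤ K * Real.exp (-α * ((n : ℝ) - (m : ℝ))) * ‖y‖)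

/-- The system `x(n+1) = A(n) x(n)`, `n ∈ J'`, admits an exponential dichotomy on `J`. -/
def ExpDichotomy (J J' : Set ℤ) (A : ℤ → X →L[ℝ] X) : Prop :=
  ∃ P : ℤ → X →L[ℝ] X, IsExpDichotomy J J' A P

/-- A subspace (given as a set) `S` of `X` is complemented: there is a closed subspace `Z`
of `X` with `X = S ⊕ Z`. -/
def IsComplementedSubspace (S : Set X) : Prop :=
  ∃ Z : Submodule ℝ X, IsClosed (Z : Set X) ∧
    (∀ v ∈ S, v ∈ Z → v = (0 : X)) ∧ ∀ v : X, ∃ s ∈ S, ∃ z ∈ Z, v = s + z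

/-- The subspace `S = {v : sup_{n ∈ ℤ⁺} ‖Φ(n,0) v‖ < ∞}` of initial conditions of bounded
forward solutions. -/
def Sset (A : ℤ → X →L[ℝ] X) : Set X :=
  {v : X | ∃ C : ℝ, ∀ n : ℤ, 0 ≤ n → ‖Phi A n 0 v‖ ≤ C}

/-- The subspace `U(m)` of all `v` for which there is a bounded sequence `(x(n))_{n ≤ m}`
with `x(m) = v` and `x(n) = A(n-1) x(n-1)` for `n ≤ m`. -/
def Uset (A : ℤ → X →L[ℝ] X) (m : ℤ) : Set X :=
  {v : X | ∃ x : ℤ → X, x m = v ∧ (∃ C : ℝ, ∀ n : ℤ, n ≤ m → ‖x n‖ ≤ C) ∧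
    ∀ n : ℤ, n ≤ m → x n = A (n - 1) (x (n - 1))}

variable {X1 : Type u} {X2 : Type u} [NormedAddCommGroup X1] [NormedSpace ℝ X1]
  [NormedAddCommGroup X2] [NormedSpace ℝ X2]

/-- The triangular system operator `(x1, x2) ↦ (A11(n) x1 + A12(n) x2, A22(n) x2)`. -/
def triangular (A11 : ℤ → X1 →L[ℝ] X1) (A12 : ℤ → X2 →L[ℝ] X1)
    (A22 : ℤ → X2 →L[ℝ] X2) (n : ℤ) : (X1 × X2) →L[ℝ] X1 × X2 :=
  (((A11 n).comp (fst ℝ X1 X2)) + ((A12 n).comp (snd ℝ X1 X2))).prod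
    ((A22 n).comp (snd ℝ X1 X2))

/-- The diagonal system operator `(x1, x2) ↦ (A11(n) x1, A22(n) x2)`. -/
def diagonal (A11 : ℤ → X1 →L[ℝ] X1) (A22 : ℤ → X2 →L[ℝ] X2) (n : ℤ) :
    (X1 × X2) →L[ℝ] X1 × X2 :=
  (A11 n).prodMap (A22 n)


/-! ### Auxiliary material for the proof -/

section PhiLemmas

variable {Y : Type u} [NormedAddCommGroup Y] [NormedSpace ℝ Y]

theorem Phi_self (A : ℤ → Y →L[ℝ] Y) (n : ℤ) : Phi A n n = ContinuousLinearMap.id ℝ Y := by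
  simp [Phi, cocycleAux]

theorem Phi_succ (A : ℤ → Y →L[ℝ] Y) {m n : ℤ} (h : n ≤ m) :
    Phi A (m + 1) n = (A m).comp (Phi A m n) := by
  have h1 : (m + 1 - n).toNat = (m - n).toNat + 1 := by omega
  have h2 : n + ((m - n).toNat : ℤ) = m := by omega
  simp only [Phi, h1, cocycleAux, h2]

theorem Phi_one (A : ℤ → Y →L[ℝ] Y) (k : ℤ) (v : Y) : Phi A (k + 1) k v = A k v := by
  rw [Phi_succ A le_rfl, Phi_self]; rfl

theorem Phi_succ_apply (A : ℤ → Y →L[ℝ] Y) {m n : ℤ} (h : n ≤ m) (v : Y) :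
    Phi A (m + 1) n v = A m (Phi A m n v) := by rw [Phi_succ A h]; rfl

theorem Phi_comp (A : ℤ → Y →L[ℝ] Y) {m k n : ℤ} (hmk : m ≤ k) (hkn : k ≤ n) (v : Y) :
    Phi A n k (Phi A k m v) = Phi A n m v := by
  obtain ⟨j, rfl⟩ : ∃ j : ℕ, n = k + j := ⟨(n - k).toNat, by omega⟩
  induction j with
  | zero => simp [Phi_self]
  | succ i ih =>
      have hki : k ≤ k + (i : ℤ) := by omega
      have hmi : m ≤ k + (i : ℤ) := le_trans hmk hki
      have e1 : (k : ℤ) + (i + 1 : ℕ) = (k + i) + 1 := by push_cast; ring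
      rw [e1, Phi_succ_apply A hki, Phi_succ_apply A hmi, ih (by omega)]

/-- Backward orbits in the kernel bundle of a dichotomy-like family. -/
theorem ker_backward_orbit (A P : ℤ → Y →L[ℝ] Y)
    (hbij : ∀ n : ℤ, n ≤ -1 → Set.BijOn (A n) {x : Y | P n x = 0} {x : Y | P (n + 1) x = 0})
    {m : ℤ} (hm : m ≤ 0) {z : Y} (hz : P m z = 0) :
    ∃ ζ : ℤ → Y, ζ m = z ∧ (∀ k : ℤ, k ≤ m → P k (ζ k) = 0) ∧
      (∀ k : ℤ, k ≤ m → Phi A m k (ζ k) = z) ∧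
      (∀ k : ℤ, k < m → A k (ζ k) = ζ (k + 1)) := by
  classical
  have step : ∀ k : ℤ, k + 1 ≤ m → ∀ w : Y, P (k+1) w = 0 →
      ∃ u : Y, P k u = 0 ∧ A k u = w := by
    intro k hk w hw
    have hk1 : k ≤ -1 := by omega
    obtain ⟨u, hu, huw⟩ := (hbij k hk1).surjOn hw
    exact ⟨u, hu, huw⟩
  let g : ℕ → Y := fun i => Nat.rec z
    (fun i u => if h : m - (i:ℤ) - 1 + 1 ≤ m ∧ P (m - (i:ℤ)) u = 0 then
        (step (m - (i:ℤ) - 1) (by omega) u (by simpa using h.2)).choose else 0) i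
  have hg0 : g 0 = z := rfl
  have hker : ∀ i : ℕ, P (m - (i:ℤ)) (g i) = 0 := by
    intro i
    induction i with
    | zero => rw [hg0]; simpa using hz
    | succ i ih =>
        have ecast : m - ((i:ℕ)+1 : ℕ) = m - (i:ℤ) - 1 := by push_cast; ring
        rw [ecast]
        show P (m - (i:ℤ) - 1) (g (i+1)) = 0
        · have hcond : m - (i:ℤ) - 1 + 1 ≤ m ∧ P (m - (i:ℤ)) (g i) = 0 := ⟨by omega, ih⟩
          have : g (i+1) = (step (m - (i:ℤ) - 1) (by omega) (g i)
              (by simpa using hcond.2)).choose := by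
            show (if h : _ ∧ _ then _ else _) = _
            rw [dif_pos hcond]
          rw [this]
          have hspec := (step (m - (i:ℤ) - 1) (by omega) (g i) (by simpa using hcond.2)).choose_spec
          simpa using hspec.1
  have hstep : ∀ i : ℕ, A (m - (i:ℤ) - 1) (g (i+1)) = g i := by
    intro i
    have hcond : m - (i:ℤ) - 1 + 1 ≤ m ∧ P (m - (i:ℤ)) (g i) = 0 := ⟨by omega, hker i⟩
    have hgeq : g (i+1) = (step (m - (i:ℤ) - 1) (by omega) (g i)
        (by simpa using hcond.2)).choose := by
      show (if h : _ ∧ _ then _ else _) = _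
      rw [dif_pos hcond]
    rw [hgeq]
    exact (step (m - (i:ℤ) - 1) (by omega) (g i) (by simpa using hcond.2)).choose_spec.2
  refine ⟨fun k => g (m - k).toNat, by simpa using hg0, ?_, ?_, ?_⟩
  · intro k hk
    have : ((m - k).toNat : ℤ) = m - k := by omega
    have h2 := hker (m - k).toNat
    rwa [this, show m - (m - k) = k by ring] at h2
  · intro k hk
    have hPhi : ∀ j : ℕ, Phi A m (m - (j:ℤ)) (g j) = z := by
      intro j
      induction j with
      | zero => simp [Phi_self, hg0]
      | succ i ih =>
          have e0 : m - ((i:ℕ)+1 : ℕ) = m - (i:ℤ) - 1 := by push_cast; ring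
          rw [e0]
          have h2 : Phi A (m - (i:ℤ)) (m - (i:ℤ) - 1) (g (i+1)) = g i := by
            have h3 := Phi_one A (m - (i:ℤ) - 1) (g (i+1))
            rw [show m - (i:ℤ) - 1 + 1 = m - (i:ℤ) by ring] at h3
            rw [h3]
            exact hstep i
          calc Phi A m (m - (i:ℤ) - 1) (g (i+1))
              = Phi A m (m - (i:ℤ)) (Phi A (m - (i:ℤ)) (m - (i:ℤ) - 1) (g (i+1))) := by
                rw [Phi_comp A (by omega) (by omega)]
            _ = Phi A m (m - (i:ℤ)) (g i) := by rw [h2]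
            _ = z := ih
    have hnat : ((m - k).toNat : ℤ) = m - k := by omega
    have := hPhi (m - k).toNat
    rw [hnat, show m - (m - k) = k by ring] at this
    simpa using this
  · intro k hk
    have hnat1 : (m - k).toNat = (m - (k+1)).toNat + 1 := by omega
    have h := hstep (m - (k+1)).toNat
    have e1 : m - ((m - (k+1)).toNat : ℤ) - 1 = k := by omega
    rw [e1] at h
    simp only []
    rw [hnat1]
    exact h

theorem Uset_zero (A : ℤ → Y →L[ℝ] Y) (m : ℤ) : (0 : Y) ∈ Uset A m :=
  ⟨fun _ => 0, rfl, ⟨0, fun _ _ => by simp⟩, fun _ _ => by simp⟩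

theorem Uset_add (A : ℤ → Y →L[ℝ] Y) {m : ℤ} {v w : Y} (hv : v ∈ Uset A m)
    (hw : w ∈ Uset A m) : v + w ∈ Uset A m := by
  obtain ⟨x, hx0, ⟨C, hC⟩, hxs⟩ := hv
  obtain ⟨y, hy0, ⟨D, hD⟩, hys⟩ := hw
  refine ⟨fun k => x k + y k, by simp only []; rw [hx0, hy0], ⟨C + D, fun n hn => ?_⟩,
    fun n hn => ?_⟩
  · exact le_trans (norm_add_le _ _) (add_le_add (hC n hn) (hD n hn))
  · simp only []; rw [hxs n hn, hys n hn]; simp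

theorem Uset_smul (A : ℤ → Y →L[ℝ] Y) {m : ℤ} {v : Y} (c : ℝ) (hv : v ∈ Uset A m) :
    c • v ∈ Uset A m := by
  obtain ⟨x, hx0, ⟨C, hC⟩, hxs⟩ := hv
  refine ⟨fun k => c • x k, by simp only []; rw [hx0], ⟨|c| * C, fun n hn => ?_⟩,
    fun n hn => ?_⟩
  · rw [norm_smul, Real.norm_eq_abs]
    exact mul_le_mul_of_nonneg_left (hC n hn) (abs_nonneg c)
  · simp only []; rw [hxs n hn]; simp

theorem Uset_neg (A : ℤ → Y →L[ℝ] Y) {m : ℤ} {v : Y} (hv : v ∈ Uset A m) : -v ∈ Uset A m := by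
  simpa using Uset_smul A (-1) hv

theorem Uset_sub (A : ℤ → Y →L[ℝ] Y) {m : ℤ} {v w : Y} (hv : v ∈ Uset A m)
    (hw : w ∈ Uset A m) : v - w ∈ Uset A m := by
  simpa [sub_eq_add_neg] using Uset_add A hv (Uset_neg A hw)

theorem Uset_step (A : ℤ → Y →L[ℝ] Y) {m : ℤ} {v : Y} (hv : v ∈ Uset A m) :
    A m v ∈ Uset A (m + 1) := by
  obtain ⟨x, hx0, ⟨C, hC⟩, hxs⟩ := hv
  refine ⟨fun k => if k ≤ m then x k else A m v,
    by simp, ⟨max C ‖A m v‖, fun n hn => ?_⟩, fun n hn => ?_⟩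
  · by_cases h : n ≤ m
    · simp only [h, if_true]; exact le_trans (hC n h) (le_max_left _ _)
    · simp only [h, if_false]; exact le_max_right _ _
  · by_cases h : n ≤ m
    · have h' : n - 1 ≤ m := by omega
      simp only [h, h', if_true]; exact hxs n h
    · have h1 : n = m + 1 := by omega
      subst h1
      have h4 : m + 1 - 1 = m := by omega
      simp only []
      rw [if_neg (by omega : ¬ (m+1 ≤ m)), h4, if_pos le_rfl, hx0]

theorem Uset_phi (A : ℤ → Y →L[ℝ] Y) {m n : ℤ} (h : m ≤ n) {v : Y} (hv : v ∈ Uset A m) :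
    Phi A n m v ∈ Uset A n := by
  obtain ⟨j, rfl⟩ : ∃ j : ℕ, n = m + j := ⟨(n - m).toNat, by omega⟩
  clear h
  induction j with
  | zero =>
      simpa [Phi, cocycleAux, Int.toNat_of_nonpos] using hv
  | succ i ih =>
      have hmi : m ≤ m + (i : ℤ) := by omega
      have e1 : (m : ℤ) + (i + 1 : ℕ) = (m + i) + 1 := by push_cast; ring
      rw [e1, Phi_succ_apply A hmi]
      exact Uset_step A ih

theorem sum_geom_Icc {r : ℝ} (hr0 : 0 ≤ r) (hr1 : r < 1) (n a b : ℤ) (h : n ≤ a) :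
    (∑ m ∈ Finset.Icc a b, r ^ ((m - n).toNat)) ≤ (1 - r)⁻¹ := by
  have hinj : ∀ x ∈ Finset.Icc a b, ∀ y ∈ Finset.Icc a b,
      (fun m : ℤ => (m - n).toNat) x = (fun m : ℤ => (m - n).toNat) y → x = y := by
    intro x hx y hy hxy
    simp only [Finset.mem_Icc] at hx hy
    simp only [] at hxy
    omega
  rw [← Finset.sum_image hinj]
  exact le_of_le_of_eq
    (Summable.sum_le_tsum _ (fun i _ => pow_nonneg hr0 i)
      (summable_geometric_of_lt_one hr0 hr1))
    (tsum_geometric_of_lt_one hr0 hr1)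

end PhiLemmas

theorem triangular_snd' (A11 : ℤ → X1 →L[ℝ] X1) (A12 : ℤ → X2 →L[ℝ] X1)
    (A22 : ℤ → X2 →L[ℝ] X2) (n : ℤ) (w : X1 × X2) :
    (triangular A11 A12 A22 n w).2 = A22 n w.2 := rfl

theorem Phi_triangular_snd (A11 : ℤ → X1 →L[ℝ] X1) (A12 : ℤ → X2 →L[ℝ] X1)
    (A22 : ℤ → X2 →L[ℝ] X2) (m n : ℤ) (w : X1 × X2) :
    (Phi (triangular A11 A12 A22) m n w).2 = Phi A22 m n w.2 := by
  suffices h : ∀ k : ℕ, ∀ w : X1 × X2,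
      (cocycleAux (triangular A11 A12 A22) n k w).2 = cocycleAux A22 n k w.2 by
    exact h _ w
  intro k
  induction k with
  | zero => intro w; rfl
  | succ i ih =>
      intro w
      show (triangular A11 A12 A22 (n+i) (cocycleAux (triangular A11 A12 A22) n i w)).2 = _
      rw [triangular_snd', ih]
      rfl

section MoreGeneric

variable {Y : Type u} [NormedAddCommGroup Y] [NormedSpace ℝ Y]

theorem phi_of_sol (A : ℤ → Y →L[ℝ] Y) {y : ℤ → Y} {n m : ℤ} (hnm : n ≤ m)
    (hsol : ∀ j : ℤ, n < j → j ≤ m → y j = A (j-1) (y (j-1))) :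
    Phi A m n (y n) = y m := by
  obtain ⟨j, rfl⟩ : ∃ j : ℕ, m = n + j := ⟨(m - n).toNat, by omega⟩
  induction j with
  | zero => simp [Phi_self]
  | succ i ih =>
      have e1 : (n : ℤ) + (i + 1 : ℕ) = (n + i) + 1 := by push_cast; ring
      rw [e1, Phi_succ_apply A (by omega)]
      rw [ih (by omega) (fun j h1 h2 => hsol j h1 (by omega))]
      have := hsol (n + i + 1) (by omega) (by omega)
      rw [this]
      norm_num

theorem bdd_neg (w : ℤ → Y) (n : ℤ) {N : ℤ} (C : ℝ) (h : ∀ j : ℤ, j ≤ n → ‖w j‖ ≤ C)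
    (hC : 0 ≤ C) : ∃ C' : ℝ, ∀ j : ℤ, j ≤ N → ‖w j‖ ≤ C' := by
  refine ⟨C + ∑ i ∈ Finset.Icc (n+1) N, ‖w i‖, fun j hj => ?_⟩
  have hsumnn : (0:ℝ) ≤ ∑ i ∈ Finset.Icc (n+1) N, ‖w i‖ :=
    Finset.sum_nonneg (fun i _ => norm_nonneg _)
  rcases le_or_gt j n with hjn | hjn
  · linarith [h j hjn]
  · have hmem : j ∈ Finset.Icc (n+1) N := by simp only [Finset.mem_Icc]; omega
    have := Finset.single_le_sum (f := fun i => ‖w i‖)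
      (fun i _ => norm_nonneg _) hmem
    linarith

end MoreGeneric

/-! ### The dichotomy context -/

structure DichCtx (H1 : Type u) (H2 : Type u) [NormedAddCommGroup H1] [NormedSpace ℝ H1]
    [NormedAddCommGroup H2] [NormedSpace ℝ H2] where
  A11 : ℤ → H1 →L[ℝ] H1
  A12 : ℤ → H2 →L[ℝ] H1
  A22 : ℤ → H2 →L[ℝ] H2
  P : ℤ → (H1 × H2) →L[ℝ] (H1 × H2)
  K : ℝ
  r : ℝ
  hK : 0 < K
  hr0 : 0 < r
  hr1 : r < 1
  hproj : ∀ n : ℤ, n ≤ 0 → ∀ v, P n (P n v) = P n v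
  hbij : ∀ n : ℤ, n ≤ -1 → Set.BijOn (triangular A11 A12 A22 n)
    {x : H1 × H2 | P n x = 0} {x : H1 × H2 | P (n+1) x = 0}
  hfwd : ∀ m n : ℤ, m ≤ 0 → n ≤ 0 → n ≤ m → ∀ v : H1 × H2,
    ‖Phi (triangular A11 A12 A22) m n (P n v)‖ ≤ K * r ^ ((m-n).toNat) * ‖v‖
  hbwd : ∀ m n : ℤ, m ≤ 0 → n ≤ 0 → m ≤ n → ∀ x y : H1 × H2,
    P m x = 0 → Phi (triangular A11 A12 A22) n m x = y - P n y →
    ‖x‖ ≤ K * r ^ ((n-m).toNat) * ‖y‖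
  Z : Submodule ℝ H2
  hZc : IsClosed (Z : Set H2)
  hZd : ∀ v ∈ Uset A22 0, v ∈ Z → v = 0
  hZs : ∀ v : H2, ∃ s ∈ Uset A22 0, ∃ z ∈ Z, v = s + z
  huniq : ∀ x2 : ℤ → H2, x2 0 = 0 → (∃ C : ℝ, ∀ n : ℤ, n ≤ 0 → ‖x2 n‖ ≤ C) →
    (∀ n : ℤ, n ≤ 0 → x2 n = A22 (n - 1) (x2 (n - 1))) → ∀ n : ℤ, n ≤ 0 → x2 n = 0

namespace DichCtx

variable {H1 : Type u} {H2 : Type u} [NormedAddCommGroup H1] [NormedSpace ℝ H1]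
  [NormedAddCommGroup H2] [NormedSpace ℝ H2] [CompleteSpace H1] [CompleteSpace H2]
  (c : DichCtx H1 H2)

/-- The triangular operator family of the context. -/
def T (c : DichCtx H1 H2) : ℤ → (H1 × H2) →L[ℝ] (H1 × H2) :=
  triangular c.A11 c.A12 c.A22

theorem hKr : 0 < c.K * (1 - c.r)⁻¹ :=
  mul_pos c.hK (inv_pos.mpr (by linarith [c.hr1]))

/-- Admissibility: for every bounded inhomogeneity there is a bounded solution on `ℤ⁻`. -/
theorem adm (f : ℤ → H2) (F : ℝ) (hf : ∀ j : ℤ, ‖f j‖ ≤ F) :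
    ∃ y : ℤ → H2, (∀ j : ℤ, j ≤ 0 → y j = c.A22 (j-1) (y (j-1)) + f j) ∧
      (∀ j : ℤ, ‖y j‖ ≤ 2 * c.K * (1-c.r)⁻¹ * F) := by
  classical
  have hF0 : 0 ≤ F := le_trans (norm_nonneg _) (hf 0)
  set ι2 : H2 →L[ℝ] H1 × H2 := ContinuousLinearMap.inr ℝ H1 H2 with hι2
  have hι2norm : ∀ v : H2, ‖ι2 v‖ = ‖v‖ := by
    intro v
    show ‖((0 : H1), v)‖ = ‖v‖
    rw [Prod.norm_def]
    simp [max_eq_right (norm_nonneg v)]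
  -- the stable part
  set term : ℤ → ℕ → H1 × H2 :=
    fun n i => Phi c.T n (n - (i:ℤ)) (c.P (n - (i:ℤ)) (ι2 (f (n - (i:ℤ))))) with hterm
  have hterm_bound : ∀ n : ℤ, n ≤ 0 → ∀ i : ℕ, ‖term n i‖ ≤ c.K * c.r ^ i * F := by
    intro n hn i
    have h1 := c.hfwd n (n - (i:ℤ)) hn (by omega) (by omega) (ι2 (f (n - (i:ℤ))))
    have h2 : (n - (n - (i:ℤ))).toNat = i := by omega
    rw [h2, hι2norm] at h1
    calc ‖term n i‖ ≤ c.K * c.r ^ i * ‖f (n - (i:ℤ))‖ := h1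
      _ ≤ c.K * c.r ^ i * F := by
          exact mul_le_mul_of_nonneg_left (hf _) (mul_nonneg c.hK.le (pow_nonneg c.hr0.le i))
  have hsummable : ∀ n : ℤ, n ≤ 0 → Summable (term n) := by
    intro n hn
    apply Summable.of_norm_bounded ?_ (hterm_bound n hn)
    exact Summable.mul_right _ (Summable.mul_left _ (summable_geometric_of_lt_one c.hr0.le c.hr1))
  set ws : ℤ → H1 × H2 := fun n => if n ≤ 0 then ∑' i : ℕ, term n i else 0 with hws
  have hws_bound : ∀ n : ℤ, ‖ws n‖ ≤ c.K * (1-c.r)⁻¹ * F := by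
    intro n
    by_cases hn : n ≤ 0
    · rw [hws]
      simp only [if_pos hn]
      calc ‖∑' i : ℕ, term n i‖ ≤ ∑' i : ℕ, (c.K * c.r ^ i * F) := by
            apply tsum_of_norm_bounded ?_ (hterm_bound n hn)
            have := (summable_geometric_of_lt_one c.hr0.le c.hr1).mul_left c.K
            have := (this.mul_right F)
            simpa [mul_comm, mul_assoc] using this.hasSum
        _ = c.K * (1-c.r)⁻¹ * F := by
            rw [tsum_mul_right, tsum_mul_left, tsum_geometric_of_lt_one c.hr0.le c.hr1]
    · rw [hws]
      simp only [if_neg hn, norm_zero]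
      exact mul_nonneg (mul_nonneg c.hK.le (inv_nonneg.mpr (by linarith [c.hr1]))) hF0
  have hws_rec : ∀ j : ℤ, j ≤ 0 →
      ws j = c.P j (ι2 (f j)) + c.T (j-1) (ws (j-1)) := by
    intro j hj
    have hsum := hsummable j hj
    have h0 : ws j = ∑' i : ℕ, term j i := by
      simp only [hws]; rw [if_pos hj]
    have h1 : ws (j-1) = ∑' i : ℕ, term (j-1) i := by
      have hj1 : j - 1 ≤ (0:ℤ) := by omega
      simp only [hws]; rw [if_pos hj1]
    have hshift : ∀ i : ℕ, term j (i+1) = c.T (j-1) (term (j-1) i) := by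
      intro i
      have e1 : j - ((i:ℕ)+1 : ℕ) = (j-1) - (i:ℤ) := by push_cast; ring
      rw [hterm]
      simp only []
      rw [e1]
      have e2 : Phi c.T j ((j-1) - (i:ℤ)) = (c.T (j-1)).comp (Phi c.T (j-1) ((j-1) - (i:ℤ))) := by
        have := Phi_succ c.T (show (j-1) - (i:ℤ) ≤ j - 1 by omega)
        rwa [show j - 1 + 1 = j by ring] at this
      rw [e2]
      rfl
    rw [h0, Summable.tsum_eq_zero_add hsum]
    congr 1
    · rw [hterm]; simp [Phi_self]
    · rw [h1, ContinuousLinearMap.map_tsum _ (hsummable (j-1) (by omega))]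
      exact tsum_congr hshift
  -- the unstable part
  have hzker : ∀ m : ℤ, m ≤ 0 → c.P m (ι2 (f m) - c.P m (ι2 (f m))) = 0 := by
    intro m hm
    rw [map_sub, c.hproj m hm, sub_self]
  have HBO : ∀ m : ℤ, m ≤ 0 → ∃ ζ : ℤ → H1 × H2,
      ζ m = ι2 (f m) - c.P m (ι2 (f m)) ∧ (∀ k : ℤ, k ≤ m → c.P k (ζ k) = 0) ∧
      (∀ k : ℤ, k ≤ m → Phi c.T m k (ζ k) = ι2 (f m) - c.P m (ι2 (f m))) ∧
      (∀ k : ℤ, k < m → c.T k (ζ k) = ζ (k + 1)) :=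
    fun m hm => ker_backward_orbit c.T c.P c.hbij hm (hzker m hm)
  choose ζ hζ0 hζker hζPhi hζstep using HBO
  have hζbound : ∀ (m : ℤ) (hm : m ≤ 0), ∀ k : ℤ, k ≤ m →
      ‖ζ m hm k‖ ≤ c.K * c.r ^ ((m-k).toNat) * F := by
    intro m hm k hk
    have h1 := c.hbwd k m (by omega) hm hk (ζ m hm k) (ι2 (f m))
      (hζker m hm k hk) (hζPhi m hm k hk)
    rw [hι2norm] at h1
    calc ‖ζ m hm k‖ ≤ c.K * c.r ^ ((m-k).toNat) * ‖f m‖ := h1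
      _ ≤ c.K * c.r ^ ((m-k).toNat) * F := by
          exact mul_le_mul_of_nonneg_left (hf _)
            (mul_nonneg c.hK.le (pow_nonneg c.hr0.le _))
  set ζ' : ℤ → ℤ → H1 × H2 := fun m n => if hm : m ≤ 0 then ζ m hm n else 0 with hζ'
  set yu : ℤ → H1 × H2 := fun n => ∑ m ∈ Finset.Icc (n+1) (0:ℤ), ζ' m n with hyu
  have hyu_bound : ∀ n : ℤ, ‖yu n‖ ≤ c.K * (1-c.r)⁻¹ * F := by
    intro n
    rw [hyu]
    simp only []
    calc ‖∑ m ∈ Finset.Icc (n+1) (0:ℤ), ζ' m n‖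
        ≤ ∑ m ∈ Finset.Icc (n+1) (0:ℤ), ‖ζ' m n‖ := norm_sum_le _ _
      _ ≤ ∑ m ∈ Finset.Icc (n+1) (0:ℤ), c.K * F * c.r ^ ((m-n).toNat) := by
          apply Finset.sum_le_sum
          intro m hmem
          rw [Finset.mem_Icc] at hmem
          have hm0 : m ≤ 0 := hmem.2
          rw [hζ']
          simp only [dif_pos hm0]
          calc ‖ζ m hm0 n‖ ≤ c.K * c.r ^ ((m-n).toNat) * F := hζbound m hm0 n (by omega)
            _ = c.K * F * c.r ^ ((m-n).toNat) := by ring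
      _ = c.K * F * ∑ m ∈ Finset.Icc (n+1) (0:ℤ), c.r ^ ((m-n).toNat) := by
          rw [Finset.mul_sum]
      _ ≤ c.K * F * (1-c.r)⁻¹ := by
          exact mul_le_mul_of_nonneg_left
            (sum_geom_Icc c.hr0.le c.hr1 n (n+1) 0 (by omega))
            (mul_nonneg c.hK.le hF0)
      _ = c.K * (1-c.r)⁻¹ * F := by ring
  have hyu_rec : ∀ j : ℤ, j ≤ 0 →
      c.T (j-1) (yu (j-1)) = yu j + (ι2 (f j) - c.P j (ι2 (f j))) := by
    intro j hj
    have e0 : (j - 1) + 1 = j := by ring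
    have h1 : c.T (j-1) (yu (j-1)) = ∑ m ∈ Finset.Icc j (0:ℤ), c.T (j-1) (ζ' m (j-1)) := by
      rw [hyu]
      simp only []
      rw [e0, map_sum]
    have h2 : ∀ m ∈ Finset.Icc j (0:ℤ), c.T (j-1) (ζ' m (j-1)) = ζ' m j := by
      intro m hmem
      rw [Finset.mem_Icc] at hmem
      have hm0 : m ≤ 0 := hmem.2
      rw [hζ']
      simp only [dif_pos hm0]
      have := hζstep m hm0 (j-1) (by omega)
      rwa [e0] at this
    rw [h1, Finset.sum_congr rfl h2]
    have hsplit : Finset.Icc j (0:ℤ) = insert j (Finset.Icc (j+1) (0:ℤ)) := by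
      ext m
      simp only [Finset.mem_Icc, Finset.mem_insert]
      omega
    rw [hsplit, Finset.sum_insert (by simp only [Finset.mem_Icc]; omega)]
    have hζ'j : ζ' j j = ι2 (f j) - c.P j (ι2 (f j)) := by
      simp only [hζ', dif_pos hj]
      exact hζ0 j hj
    rw [hζ'j, hyu]
    simp only []
    abel
  -- the solution
  refine ⟨fun n => if n ≤ 0 then (ws n).2 - (yu n).2 else 0, ?_, ?_⟩
  · intro j hj
    have hj1 : j - 1 ≤ 0 := by omega
    simp only [if_pos hj, if_pos hj1]
    have hA : ∀ w : H1 × H2, c.A22 (j-1) w.2 = (c.T (j-1) w).2 := fun w => rfl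
    rw [map_sub, hA (ws (j-1)), hA (yu (j-1))]
    have h1 := hws_rec j hj
    have h2 := hyu_rec j hj
    have h3 : (c.T (j-1) (ws (j-1))).2 = (ws j).2 - (c.P j (ι2 (f j))).2 := by
      rw [h1]; simp
    have h4 : (c.T (j-1) (yu (j-1))).2 = (yu j).2 + (f j - (c.P j (ι2 (f j))).2) := by
      rw [h2]
      have : (ι2 (f j)).2 = f j := rfl
      simp [this]
    rw [h3, h4]
    abel
  · intro j
    by_cases hj : j ≤ 0
    · simp only [if_pos hj]
      calc ‖(ws j).2 - (yu j).2‖ ≤ ‖(ws j).2‖ + ‖(yu j).2‖ := norm_sub_le _ _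
        _ ≤ ‖ws j‖ + ‖yu j‖ := add_le_add (norm_snd_le _) (norm_snd_le _)
        _ ≤ c.K * (1-c.r)⁻¹ * F + c.K * (1-c.r)⁻¹ * F := add_le_add (hws_bound j) (hyu_bound j)
        _ = 2 * c.K * (1-c.r)⁻¹ * F := by ring
    · simp only [if_neg hj, norm_zero]
      have h2 : (0:ℝ) ≤ 2 * c.K * (1-c.r)⁻¹ :=
        mul_nonneg (mul_nonneg (by norm_num) c.hK.le) (inv_nonneg.mpr (by linarith [c.hr1]))
      exact mul_nonneg h2 hF0


/-! ### The Banach space of bounded backward solutions and normalized admissibility -/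

/-- The closed subspace of bounded backward solutions (in the space of bounded functions),
extended by `0` on the positive axis. -/
def Msol (c : DichCtx H1 H2) : Submodule ℝ (BoundedContinuousFunction ℤ H2) where
  carrier := {x | (∀ j : ℤ, j ≤ 0 → x j = c.A22 (j-1) (x (j-1))) ∧ ∀ j : ℤ, 0 < j → x j = 0}
  add_mem' := by
    intro a b ha hb
    refine ⟨fun j hj => ?_, fun j hj => ?_⟩
    · show a j + b j = c.A22 (j-1) (a (j-1) + b (j-1))
      rw [map_add, ha.1 j hj, hb.1 j hj]
    · show a j + b j = 0
      rw [ha.2 j hj, hb.2 j hj, add_zero]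
  zero_mem' := ⟨fun j _ => by simp, fun j _ => rfl⟩
  smul_mem' := by
    intro t a ha
    refine ⟨fun j hj => ?_, fun j hj => ?_⟩
    · show t • a j = c.A22 (j-1) (t • a (j-1))
      rw [map_smul, ha.1 j hj]
    · show t • a j = 0
      rw [ha.2 j hj, smul_zero]

theorem Msol_closed (c : DichCtx H1 H2) :
    IsClosed ((c.Msol : Set (BoundedContinuousFunction ℤ H2))) := by
  have hev : ∀ j : ℤ, Continuous fun x : BoundedContinuousFunction ℤ H2 => x j :=
    fun j => (BoundedContinuousFunction.lipschitz_eval_const j).continuous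
  have : (c.Msol : Set (BoundedContinuousFunction ℤ H2)) =
      (⋂ (j : ℤ) (_ : j ≤ 0), {x : BoundedContinuousFunction ℤ H2 |
        x j = c.A22 (j-1) (x (j-1))}) ∩
      (⋂ (j : ℤ) (_ : 0 < j), {x : BoundedContinuousFunction ℤ H2 | x j = 0}) := by
    ext x
    simp only [Set.mem_inter_iff, Set.mem_iInter, Set.mem_setOf_eq]
    exact ⟨fun h => ⟨fun j hj => h.1 j hj, fun j hj => h.2 j hj⟩,
      fun h => ⟨fun j hj => h.1 j hj, fun j hj => h.2 j hj⟩⟩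
  rw [this]
  apply IsClosed.inter
  · apply isClosed_iInter; intro j; apply isClosed_iInter; intro _
    exact isClosed_eq (hev j) (((c.A22 (j-1)).continuous).comp (hev (j-1)))
  · apply isClosed_iInter; intro j; apply isClosed_iInter; intro _
    exact isClosed_eq (hev j) continuous_const

instance Msol_complete (c : DichCtx H1 H2) : CompleteSpace (↥c.Msol) :=
  IsClosed.completeSpace_coe (hs := c.Msol_closed)

instance Zsub_complete (c : DichCtx H1 H2) : CompleteSpace (↥c.Z) :=
  IsClosed.completeSpace_coe (hs := c.hZc)

/-- The continuous linear map `(x, z) ↦ x 0 + z`. -/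
def Psi (c : DichCtx H1 H2) : (↥c.Msol × ↥c.Z) →L[ℝ] H2 :=
  ((BoundedContinuousFunction.evalCLM ℝ (0:ℤ)).comp ((c.Msol).subtypeL)).comp
      (ContinuousLinearMap.fst ℝ (↥c.Msol) (↥c.Z)) +
    (c.Z.subtypeL).comp (ContinuousLinearMap.snd ℝ (↥c.Msol) (↥c.Z))

theorem Psi_apply (c : DichCtx H1 H2) (x : ↥c.Msol) (z : ↥c.Z) :
    c.Psi (x, z) = (x : BoundedContinuousFunction ℤ H2) 0 + (z : H2) := rfl

theorem mem_Uset_of_Msol (c : DichCtx H1 H2) (x : ↥c.Msol) (n : ℤ) (hn : n ≤ 0) :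
    (x : BoundedContinuousFunction ℤ H2) n ∈ Uset c.A22 n := by
  obtain ⟨hsol, -⟩ := x.2
  exact ⟨fun j => (x : BoundedContinuousFunction ℤ H2) j, rfl,
    ⟨‖(x : BoundedContinuousFunction ℤ H2)‖,
      fun j _ => BoundedContinuousFunction.norm_coe_le_norm _ j⟩,
    fun j hj => hsol j (le_trans hj hn)⟩

theorem Psi_bijective (c : DichCtx H1 H2) : Function.Bijective c.Psi := by
  constructor
  · apply (injective_iff_map_eq_zero c.Psi).mpr
    rintro ⟨x, z⟩ hp
    rw [Psi_apply] at hp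
    have hx0 : (x : BoundedContinuousFunction ℤ H2) 0 = -(z:H2) :=
      eq_neg_of_add_eq_zero_left hp
    have hU : (x : BoundedContinuousFunction ℤ H2) 0 ∈ Uset c.A22 0 :=
      c.mem_Uset_of_Msol x 0 le_rfl
    have hZm : (x : BoundedContinuousFunction ℤ H2) 0 ∈ c.Z := by
      rw [hx0]; exact neg_mem z.2
    have h0 : (x : BoundedContinuousFunction ℤ H2) 0 = 0 := c.hZd _ hU hZm
    have hzero : ∀ j : ℤ, j ≤ 0 → (x : BoundedContinuousFunction ℤ H2) j = 0 :=
      c.huniq _ h0 ⟨‖(x : BoundedContinuousFunction ℤ H2)‖,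
        fun j _ => BoundedContinuousFunction.norm_coe_le_norm _ j⟩
        (fun j hj => x.2.1 j hj)
    have hx : x = 0 := by
      apply Subtype.ext
      apply BoundedContinuousFunction.ext
      intro j
      rcases le_or_gt j 0 with h | h
      · simpa using hzero j h
      · simpa using x.2.2 j h
    have hz : z = 0 := by
      apply Subtype.ext
      have : (z : H2) = -((x : BoundedContinuousFunction ℤ H2) 0) := by
        rw [hx0]; simp
      rw [this, h0]; simp
    rw [hx, hz]; rfl
  · intro v
    obtain ⟨s, hs, z, hz, hv⟩ := c.hZs v
    obtain ⟨xt, hx0, ⟨C, hC⟩, hsol⟩ := hs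
    have hbound : ∀ j : ℤ, ‖(if j ≤ 0 then xt j else 0 : H2)‖ ≤ max C 0 := by
      intro j
      by_cases hj : j ≤ 0
      · rw [if_pos hj]; exact le_trans (hC j hj) (le_max_left _ _)
      · rw [if_neg hj]; simp
    set X : BoundedContinuousFunction ℤ H2 :=
      BoundedContinuousFunction.ofNormedAddCommGroup (fun j => if j ≤ 0 then xt j else 0)
        continuous_of_discreteTopology (max C 0) hbound with hX
    have hXcoe : ∀ j : ℤ, X j = if j ≤ 0 then xt j else 0 := fun j => rfl
    have hXmem : X ∈ c.Msol := by
      refine ⟨fun j hj => ?_, fun j hj => ?_⟩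
      · rw [hXcoe, hXcoe, if_pos hj, if_pos (by omega : j - 1 ≤ 0)]
        exact hsol j hj
      · rw [hXcoe, if_neg (by omega)]
    refine ⟨(⟨X, hXmem⟩, ⟨z, hz⟩), ?_⟩
    rw [Psi_apply]
    show X 0 + z = v
    rw [hXcoe, if_pos le_rfl, hx0, hv]

/-- The Banach isomorphism `Msol × Z ≃ H2`. -/
def PsiE (c : DichCtx H1 H2) : (↥c.Msol × ↥c.Z) ≃L[ℝ] H2 :=
  ContinuousLinearEquiv.ofBijective c.Psi
    (LinearMap.ker_eq_bot.mpr c.Psi_bijective.1)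
    (LinearMap.range_eq_top.mpr c.Psi_bijective.2)

/-- The constant controlling the inverse of `Psi`. -/
def CPsi (c : DichCtx H1 H2) : ℝ := ‖(c.PsiE.symm : H2 →L[ℝ] (↥c.Msol × ↥c.Z))‖

/-! ### Normalized admissibility -/

/-- The master constant. -/
def kN (c : DichCtx H1 H2) : ℝ := 2*c.K*(1-c.r)⁻¹ * (1 + c.CPsi)

theorem CPsi_nonneg (c : DichCtx H1 H2) : 0 ≤ c.CPsi :=
  ContinuousLinearMap.opNorm_nonneg _

theorem kN_pos (c : DichCtx H1 H2) : 0 < c.kN := by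
  have h1 : 0 < 2*c.K*(1-c.r)⁻¹ := by
    have := c.hK
    have : (0:ℝ) < (1-c.r)⁻¹ := inv_pos.mpr (by linarith [c.hr1])
    nlinarith [c.hK]
  have h2 : (0:ℝ) < 1 + c.CPsi := by linarith [c.CPsi_nonneg]
  exact mul_pos h1 h2

theorem norm_unique (c : DichCtx H1 H2) {d : ℤ → H2}
    (hsol : ∀ j : ℤ, j ≤ 0 → d j = c.A22 (j-1) (d (j-1)))
    (hbdd : ∃ C : ℝ, ∀ j : ℤ, j ≤ 0 → ‖d j‖ ≤ C) (hd0 : d 0 ∈ c.Z) :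
    ∀ j : ℤ, j ≤ 0 → d j = 0 := by
  have hU : d 0 ∈ Uset c.A22 0 := ⟨d, rfl, hbdd, hsol⟩
  exact c.huniq d (c.hZd _ hU hd0) hbdd hsol

theorem adm_norm (c : DichCtx H1 H2) (f : ℤ → H2) (F : ℝ) (hf : ∀ j : ℤ, ‖f j‖ ≤ F) :
    ∃ y : ℤ → H2, (∀ j : ℤ, j ≤ 0 → y j = c.A22 (j-1) (y (j-1)) + f j) ∧
      (∀ j : ℤ, j ≤ 0 → ‖y j‖ ≤ c.kN * F) ∧ y 0 ∈ c.Z := by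
  obtain ⟨y, hsol, hbdd⟩ := c.adm f F hf
  set p := c.PsiE.symm (y 0) with hp
  have happ : c.Psi p = y 0 := by
    rw [hp]
    exact c.PsiE.apply_symm_apply (y 0)
  set x : ↥c.Msol := p.1 with hx
  set z : ↥c.Z := p.2 with hz
  have happ2 : (x : BoundedContinuousFunction ℤ H2) 0 + (z : H2) = y 0 := by
    rw [← happ, hx, hz]
    rfl
  have hxnorm : ∀ j : ℤ, ‖(x : BoundedContinuousFunction ℤ H2) j‖ ≤ c.CPsi * ‖y 0‖ := by
    intro j
    calc ‖(x : BoundedContinuousFunction ℤ H2) j‖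
        ≤ ‖(x : BoundedContinuousFunction ℤ H2)‖ :=
          BoundedContinuousFunction.norm_coe_le_norm _ j
      _ ≤ ‖p‖ := norm_fst_le p
      _ ≤ c.CPsi * ‖y 0‖ := by
          rw [hp]
          exact (c.PsiE.symm : H2 →L[ℝ] (↥c.Msol × ↥c.Z)).le_opNorm (y 0)
  have hF0 : 0 ≤ F := le_trans (norm_nonneg _) (hf 0)
  refine ⟨fun j => y j - (x : BoundedContinuousFunction ℤ H2) j, fun j hj => ?_, fun j hj => ?_, ?_⟩
  · simp only []
    rw [map_sub (c.A22 (j-1)) (y (j-1)) ((x : BoundedContinuousFunction ℤ H2) (j-1)),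
      hsol j hj, x.2.1 j hj]
    abel
  · simp only []
    have h1 : ‖y j - (x : BoundedContinuousFunction ℤ H2) j‖ ≤
        ‖y j‖ + ‖(x : BoundedContinuousFunction ℤ H2) j‖ := norm_sub_le _ _
    have h2 := hbdd j
    have h3 := hxnorm j
    have h4 : ‖y 0‖ ≤ 2*c.K*(1-c.r)⁻¹ * F := hbdd 0
    have h5 : c.CPsi * ‖y 0‖ ≤ c.CPsi * (2*c.K*(1-c.r)⁻¹ * F) :=
      mul_le_mul_of_nonneg_left h4 c.CPsi_nonneg
    rw [kN]
    nlinarith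
  · simp only []
    have : y 0 - (x : BoundedContinuousFunction ℤ H2) 0 = (z : H2) := by
      rw [← happ2]; abel
    rw [this]
    exact z.2

/-- Any bounded normalized solution satisfies the uniform bound. -/
theorem test_bound (c : DichCtx H1 H2) (f : ℤ → H2) (F : ℝ) (hf : ∀ j : ℤ, ‖f j‖ ≤ F)
    (w : ℤ → H2) (hwsol : ∀ j : ℤ, j ≤ 0 → w j = c.A22 (j-1) (w (j-1)) + f j)
    (hwbdd : ∃ C : ℝ, ∀ j : ℤ, j ≤ 0 → ‖w j‖ ≤ C) (hw0 : w 0 ∈ c.Z) :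
    ∀ j : ℤ, j ≤ 0 → ‖w j‖ ≤ c.kN * F := by
  obtain ⟨y, hysol, hybdd, hy0⟩ := c.adm_norm f F hf
  obtain ⟨C, hC⟩ := hwbdd
  have hdsol : ∀ j : ℤ, j ≤ 0 → (fun j => y j - w j) j =
      c.A22 (j-1) ((fun j => y j - w j) (j-1)) := by
    intro j hj
    simp only []
    rw [map_sub (c.A22 (j-1)) (y (j-1)) (w (j-1)), hysol j hj, hwsol j hj]
    abel
  have hdzero := c.norm_unique hdsol
    ⟨c.kN * F + C, fun j hj => le_trans (norm_sub_le _ _) (add_le_add (hybdd j hj) (hC j hj))⟩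
    (sub_mem hy0 hw0)
  intro j hj
  have := hdzero j hj
  have heq : w j = y j := by
    have h2 : y j - w j = 0 := this
    have := sub_eq_zero.mp h2
    exact this.symm
  rw [heq]
  exact hybdd j hj

/-! ### The splitting `H2 = U(n) ⊕ R(n)` and the projections -/

/-- The stable space at time `n`: forward image at time `0` lies in `Z`. -/
def Rset (c : DichCtx H1 H2) (n : ℤ) : Set H2 := {v : H2 | Phi c.A22 0 n v ∈ c.Z}

theorem Rset_zero (c : DichCtx H1 H2) (n : ℤ) : (0:H2) ∈ c.Rset n := by
  show Phi c.A22 0 n 0 ∈ c.Z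
  rw [map_zero]
  exact zero_mem _

theorem Rset_add (c : DichCtx H1 H2) {n : ℤ} {v w : H2} (hv : v ∈ c.Rset n)
    (hw : w ∈ c.Rset n) : v + w ∈ c.Rset n := by
  show Phi c.A22 0 n (v + w) ∈ c.Z
  rw [map_add]; exact add_mem hv hw

theorem Rset_sub (c : DichCtx H1 H2) {n : ℤ} {v w : H2} (hv : v ∈ c.Rset n)
    (hw : w ∈ c.Rset n) : v - w ∈ c.Rset n := by
  show Phi c.A22 0 n (v - w) ∈ c.Z
  rw [map_sub]; exact sub_mem hv hw

theorem Rset_smul (c : DichCtx H1 H2) {n : ℤ} {v : H2} (t : ℝ) (hv : v ∈ c.Rset n) :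
    t • v ∈ c.Rset n := by
  show Phi c.A22 0 n (t • v) ∈ c.Z
  rw [map_smul]; exact Submodule.smul_mem _ t hv

theorem Rset_step (c : DichCtx H1 H2) {n : ℤ} (hn : n ≤ -1) {v : H2} (hv : v ∈ c.Rset n) :
    c.A22 n v ∈ c.Rset (n+1) := by
  show Phi c.A22 0 (n+1) (c.A22 n v) ∈ c.Z
  have h1 : c.A22 n v = Phi c.A22 (n+1) n v := (Phi_one c.A22 n v).symm
  rw [h1, Phi_comp c.A22 (by omega) (by omega)]
  exact hv

theorem U_cap_R (c : DichCtx H1 H2) {n : ℤ} (hn : n ≤ 0) {u : H2}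
    (hu : u ∈ Uset c.A22 n) (hr : u ∈ c.Rset n) : u = 0 := by
  have h1 : Phi c.A22 0 n u ∈ Uset c.A22 0 := Uset_phi c.A22 hn hu
  have h2 : Phi c.A22 0 n u = 0 := c.hZd _ h1 hr
  obtain ⟨x, hx0, ⟨C, hC⟩, hsol⟩ := hu
  set X : ℤ → H2 := fun j => if j ≤ n then x j else Phi c.A22 j n u with hX
  have hXn : X n = u := by rw [hX]; simp only [if_pos le_rfl]; exact hx0
  have hX0 : X 0 = 0 := by
    rcases lt_or_eq_of_le hn with h | h
    · rw [hX]; simp only [if_neg (by omega : ¬ (0:ℤ) ≤ n)]; exact h2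
    · rw [← h] at h2 ⊢
      rw [hXn]
      rw [Phi_self] at h2
      exact h2
  have hXbd : ∀ j : ℤ, j ≤ n → ‖X j‖ ≤ C := by
    intro j hj; rw [hX]; simp only [if_pos hj]; exact hC j hj
  have hXsol : ∀ j : ℤ, j ≤ 0 → X j = c.A22 (j-1) (X (j-1)) := by
    intro j hj
    rcases le_or_gt j n with h | h
    · rw [hX]; simp only [if_pos h, if_pos (by omega : j - 1 ≤ n)]
      exact hsol j h
    · rcases eq_or_lt_of_le (by omega : n + 1 ≤ j) with h1 | h1
      · rw [hX]
        simp only [if_neg (by omega : ¬ j ≤ n), if_pos (by omega : j - 1 ≤ n)]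
        rw [show j - 1 = n by omega, hx0, ← h1]
        exact Phi_one c.A22 n u
      · rw [hX]
        simp only [if_neg (by omega : ¬ j ≤ n), if_neg (by omega : ¬ j - 1 ≤ n)]
        have := Phi_succ_apply c.A22 (show n ≤ j - 1 by omega) u
        rw [show j - 1 + 1 = j by ring] at this
        exact this
  obtain ⟨C', hC'⟩ := bdd_neg X n C hXbd (le_trans (norm_nonneg _) (hC n le_rfl))
  have := c.huniq X hX0 ⟨C', hC'⟩ hXsol n hn
  rw [hXn] at this
  exact this

theorem decomp (c : DichCtx H1 H2) {n : ℤ} (hn : n ≤ 0) (v : H2) :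
    ∃ u ∈ Uset c.A22 n, v - u ∈ c.Rset n := by
  set p := c.PsiE.symm (Phi c.A22 0 n v) with hp
  set x : ↥c.Msol := p.1 with hx
  have happ : (x : BoundedContinuousFunction ℤ H2) 0 + (p.2 : H2) = Phi c.A22 0 n v := by
    have : c.Psi p = Phi c.A22 0 n v := by rw [hp]; exact c.PsiE.apply_symm_apply _
    rw [← this]; rfl
  refine ⟨(x : BoundedContinuousFunction ℤ H2) n, c.mem_Uset_of_Msol x n hn, ?_⟩
  show Phi c.A22 0 n (v - (x : BoundedContinuousFunction ℤ H2) n) ∈ c.Z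
  rw [map_sub]
  have hphi : Phi c.A22 0 n ((x : BoundedContinuousFunction ℤ H2) n) =
      (x : BoundedContinuousFunction ℤ H2) 0 :=
    phi_of_sol c.A22 hn (fun j h1 h2 => x.2.1 j h2)
  rw [hphi]
  have : Phi c.A22 0 n v - (x : BoundedContinuousFunction ℤ H2) 0 = (p.2 : H2) := by
    rw [← happ]; abel
  rw [this]
  exact p.2.2

/-- The projection onto `Rset` along `Uset`, as a bare function. -/
def P2fun (c : DichCtx H1 H2) (n : ℤ) : H2 → H2 := fun v =>
  if hn : n ≤ 0 then v - (c.decomp hn v).choose else 0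

theorem P2fun_spec (c : DichCtx H1 H2) {n : ℤ} (hn : n ≤ 0) (v : H2) :
    c.P2fun n v ∈ c.Rset n ∧ v - c.P2fun n v ∈ Uset c.A22 n := by
  unfold P2fun
  rw [dif_pos hn]
  obtain ⟨h1, h2⟩ := (c.decomp hn v).choose_spec
  constructor
  · exact h2
  · have : v - (v - (c.decomp hn v).choose) = (c.decomp hn v).choose := by abel
    rw [this]
    exact h1

theorem P2fun_eq (c : DichCtx H1 H2) {n : ℤ} (hn : n ≤ 0) {v r : H2}
    (hr : r ∈ c.Rset n) (hu : v - r ∈ Uset c.A22 n) : c.P2fun n v = r := by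
  obtain ⟨h1, h2⟩ := c.P2fun_spec hn v
  have hd : c.P2fun n v - r ∈ Uset c.A22 n := by
    have : c.P2fun n v - r = (v - r) - (v - c.P2fun n v) := by abel
    rw [this]
    exact Uset_sub c.A22 hu h2
  have hdr : c.P2fun n v - r ∈ c.Rset n := c.Rset_sub h1 hr
  have := c.U_cap_R hn hd hdr
  have h3 : c.P2fun n v = r := by
    have h4 := sub_eq_zero.mp this
    exact h4
  exact h3

theorem P2fun_add (c : DichCtx H1 H2) (n : ℤ) (v w : H2) :
    c.P2fun n (v + w) = c.P2fun n v + c.P2fun n w := by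
  by_cases hn : n ≤ 0
  · obtain ⟨hv1, hv2⟩ := c.P2fun_spec hn v
    obtain ⟨hw1, hw2⟩ := c.P2fun_spec hn w
    apply c.P2fun_eq hn (c.Rset_add hv1 hw1)
    have : v + w - (c.P2fun n v + c.P2fun n w) = (v - c.P2fun n v) + (w - c.P2fun n w) := by
      abel
    rw [this]
    exact Uset_add c.A22 hv2 hw2
  · unfold P2fun
    rw [dif_neg hn, dif_neg hn, dif_neg hn, add_zero]

theorem P2fun_smul (c : DichCtx H1 H2) (n : ℤ) (t : ℝ) (v : H2) :
    c.P2fun n (t • v) = t • c.P2fun n v := by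
  by_cases hn : n ≤ 0
  · obtain ⟨hv1, hv2⟩ := c.P2fun_spec hn v
    apply c.P2fun_eq hn (c.Rset_smul t hv1)
    have : t • v - t • c.P2fun n v = t • (v - c.P2fun n v) := by
      rw [smul_sub]
    rw [this]
    exact Uset_smul c.A22 t hv2
  · unfold P2fun
    rw [dif_neg hn, dif_neg hn, smul_zero]

/-- The δ-test: the projection is given by the value at `n` of the normalized bounded
solution with a δ-inhomogeneity, whence uniformly bounded. -/
theorem P2fun_bound (c : DichCtx H1 H2) (n : ℤ) (v : H2) :
    ‖c.P2fun n v‖ ≤ c.kN * ‖v‖ := by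
  by_cases hn : n ≤ 0
  · set f : ℤ → H2 := fun j => if j = n then v else 0 with hf
    have hfb : ∀ j : ℤ, ‖f j‖ ≤ ‖v‖ := by
      intro j; rw [hf]
      by_cases h : j = n
      · simp [h]
      · simp [h]
    obtain ⟨y, hysol, hybdd, hy0⟩ := c.adm_norm f ‖v‖ hfb
    have hyRn : y n ∈ c.Rset n := by
      show Phi c.A22 0 n (y n) ∈ c.Z
      have : Phi c.A22 0 n (y n) = y 0 := by
        apply phi_of_sol c.A22 hn
        intro j h1 h2
        have := hysol j h2
        rw [hf] at this
        simp only [if_neg (by omega : ¬ j = n)] at this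
        rw [this, add_zero]
      rw [this]
      exact hy0
    have hyUn : v - y n ∈ Uset c.A22 n := by
      refine ⟨fun k => (if k = n then v else 0) - y k, by simp, ?_, ?_⟩
      · refine ⟨‖v‖ + c.kN * ‖v‖, fun k hk => ?_⟩
        have h1 : ‖(if k = n then v else 0 : H2)‖ ≤ ‖v‖ := hfb k
        calc ‖(if k = n then v else 0) - y k‖ ≤ ‖(if k = n then v else 0 : H2)‖ + ‖y k‖ :=
            norm_sub_le _ _
          _ ≤ ‖v‖ + c.kN * ‖v‖ := add_le_add h1 (hybdd k (le_trans hk hn))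
      · intro k hk
        simp only []
        have hyk := hysol k (le_trans hk hn)
        rw [hf] at hyk
        simp only [] at hyk
        rcases eq_or_lt_of_le hk with h | h
        · -- k = n
          subst h
          rw [if_pos rfl, if_neg (by omega : ¬ k - 1 = k), hyk, if_pos rfl]
          rw [map_sub, map_zero]
          abel
        · -- k < n
          rw [if_neg (by omega : ¬ k = n), if_neg (by omega : ¬ k - 1 = n), hyk,
            if_neg (by omega : ¬ k = n)]
          rw [map_sub, map_zero]
          abel
    have := c.P2fun_eq hn hyRn hyUn
    rw [this]
    exact hybdd n hn
  · unfold P2fun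
    rw [dif_neg hn]
    rw [norm_zero]
    exact mul_nonneg c.kN_pos.le (norm_nonneg v)

/-- The projection as a continuous linear map. -/
def P2 (c : DichCtx H1 H2) (n : ℤ) : H2 →L[ℝ] H2 :=
  LinearMap.mkContinuous
    { toFun := c.P2fun n
      map_add' := c.P2fun_add n
      map_smul' := c.P2fun_smul n }
    c.kN (c.P2fun_bound n)

theorem P2_apply (c : DichCtx H1 H2) (n : ℤ) (v : H2) : c.P2 n v = c.P2fun n v := rfl

theorem P2_zero_iff (c : DichCtx H1 H2) {n : ℤ} (hn : n ≤ 0) (v : H2) :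
    c.P2 n v = 0 ↔ v ∈ Uset c.A22 n := by
  rw [P2_apply]
  constructor
  · intro h
    have h2 := (c.P2fun_spec hn v).2
    rw [h, sub_zero] at h2
    exact h2
  · intro h
    apply c.P2fun_eq hn (c.Rset_zero n)
    rw [sub_zero]
    exact h

theorem P2_mem_Rset (c : DichCtx H1 H2) {n : ℤ} (hn : n ≤ 0) (v : H2) :
    c.P2 n v ∈ c.Rset n := (c.P2fun_spec hn v).1

theorem P2_idem (c : DichCtx H1 H2) {n : ℤ} (hn : n ≤ 0) {v : H2} (hv : v ∈ c.Rset n) :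
    c.P2 n v = v := by
  rw [P2_apply]
  exact c.P2fun_eq hn hv (by rw [sub_self]; exact Uset_zero c.A22 n)

end DichCtx

/-! ### Massera–Schäffer type scalar lemmas -/

theorem MS_fwd {h : ℤ → ℝ} {n m : ℤ} (hnm : n ≤ m) {k : ℝ} (hk : 2 ≤ k)
    (hpos : ∀ i : ℤ, n ≤ i → i ≤ m → 0 < h i)
    (hineq : ∀ j : ℤ, n ≤ j → j ≤ m → (∑ i ∈ Finset.Icc n j, (h i)⁻¹) * h j ≤ k) :
    h m ≤ k * (1 - 1/k) ^ ((m - n).toNat) * h n := by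
  set σ : ℤ → ℝ := fun j => ∑ i ∈ Finset.Icc n j, (h i)⁻¹ with hσ
  set θ : ℝ := 1 - 1/k with hθ
  have hkpos : (0:ℝ) < k := by linarith
  have hθpos : 0 < θ := by
    rw [hθ]
    have : 1/k ≤ 1/2 := by
      apply div_le_div_of_nonneg_left <;> linarith
    linarith
  have hθlt : θ < 1 := by
    rw [hθ]
    have : 0 < 1/k := by positivity
    linarith
  have hσpos : ∀ j : ℤ, n ≤ j → j ≤ m → 0 < σ j := by
    intro j h1 h2
    apply Finset.sum_pos
    · intro i hi
      rw [Finset.mem_Icc] at hi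
      exact inv_pos.mpr (hpos i hi.1 (le_trans hi.2 h2))
    · exact ⟨n, by simp only [Finset.mem_Icc]; omega⟩
  have hsplit : ∀ j : ℤ, n < j → j ≤ m → σ j = (h j)⁻¹ + σ (j-1) := by
    intro j h1 h2
    rw [hσ]
    simp only []
    have : Finset.Icc n j = insert j (Finset.Icc n (j-1)) := by
      ext i; simp only [Finset.mem_Icc, Finset.mem_insert]; omega
    rw [this, Finset.sum_insert (by simp only [Finset.mem_Icc]; omega)]
  have hstep : ∀ j : ℤ, n < j → j ≤ m → σ (j-1) ≤ θ * σ j := by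
    intro j h1 h2
    have hs := hsplit j h1 h2
    have hiq := hineq j (by omega) h2
    have hj := hpos j (by omega) h2
    have hinv : σ j / k ≤ (h j)⁻¹ := by
      rw [div_le_iff₀ hkpos]
      have h4 : σ j * h j ≤ k := hiq
      calc σ j = σ j * h j * (h j)⁻¹ := by field_simp
        _ ≤ k * (h j)⁻¹ := mul_le_mul_of_nonneg_right h4 (inv_nonneg.mpr hj.le)
        _ = (h j)⁻¹ * k := by ring
    have : σ (j-1) = σ j - (h j)⁻¹ := by rw [hs]; ring
    rw [this, hθ]
    have : σ j / k ≤ (h j)⁻¹ := hinv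
    have hq : σ j - (h j)⁻¹ ≤ σ j - σ j / k := by linarith
    calc σ j - (h j)⁻¹ ≤ σ j - σ j/k := hq
      _ = (1 - 1/k) * σ j := by ring
  have hind : ∀ i : ℕ, n + (i:ℤ) ≤ m → σ n ≤ θ ^ i * σ (n + i) := by
    intro i
    induction i with
    | zero => intro _; simp
    | succ i ih =>
        intro hi
        have h1 : n + (i:ℤ) ≤ m := by push_cast at hi ⊢; omega
        have h2 := ih h1
        have h3 : σ (n + (i:ℤ)) ≤ θ * σ (n + (i:ℤ) + 1) := by
          have := hstep (n + (i:ℤ) + 1) (by omega) (by push_cast at hi; omega)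
          rwa [show n + (i:ℤ) + 1 - 1 = n + (i:ℤ) by ring] at this
        calc σ n ≤ θ ^ i * σ (n + i) := h2
          _ ≤ θ ^ i * (θ * σ (n + (i:ℤ) + 1)) :=
              mul_le_mul_of_nonneg_left h3 (pow_nonneg hθpos.le i)
          _ = θ ^ (i+1) * σ (n + ((i:ℕ)+1:ℕ)) := by
              push_cast
              ring_nf
  have hσn : σ n = (h n)⁻¹ := by
    rw [hσ]
    simp only []
    rw [Finset.Icc_self, Finset.sum_singleton]
  set i0 : ℕ := (m - n).toNat with hi0
  have hi0m : n + (i0:ℤ) = m := by omega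
  have hfin := hind i0 (by omega)
  rw [hσn, hi0m] at hfin
  -- conclude
  have hσm := hσpos m hnm le_rfl
  have hhn := hpos n le_rfl hnm
  have hhm := hpos m hnm le_rfl
  have hiqm := hineq m hnm le_rfl
  have h1 : h m ≤ k / σ m := by
    rw [le_div_iff₀ hσm]
    calc h m * σ m = σ m * h m := by ring
      _ ≤ k := hiqm
  have h2 : 1 ≤ θ ^ i0 * σ m * h n := by
    calc (1:ℝ) = (h n)⁻¹ * h n := by field_simp
      _ ≤ (θ ^ i0 * σ m) * h n := mul_le_mul_of_nonneg_right hfin hhn.le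
  have h3 : k / σ m ≤ k * θ ^ i0 * h n := by
    rw [div_le_iff₀ hσm]
    calc k = k * 1 := by ring
      _ ≤ k * (θ ^ i0 * σ m * h n) := by
          apply mul_le_mul_of_nonneg_left h2 hkpos.le
      _ = k * θ ^ i0 * h n * σ m := by ring
  calc h m ≤ k / σ m := h1
    _ ≤ k * θ ^ i0 * h n := h3
    _ = k * θ ^ i0 * h n := rfl

theorem MS_bwd {h : ℤ → ℝ} {m n : ℤ} (hmn : m ≤ n) {k : ℝ} (hk : 2 ≤ k)
    (hpos : ∀ i : ℤ, m ≤ i → i ≤ n → 0 < h i)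
    (hineq : ∀ j : ℤ, m ≤ j → j ≤ n → (∑ i ∈ Finset.Icc (j+1) n, (h i)⁻¹) * h j ≤ k) :
    h m ≤ (k+1) * (k/(k+1)) ^ ((n - m).toNat) * h n := by
  set σ : ℤ → ℝ := fun j => ∑ i ∈ Finset.Icc (j+1) n, (h i)⁻¹ with hσ
  set ρ : ℝ := k/(k+1) with hρ
  have hkpos : (0:ℝ) < k := by linarith
  have hρpos : 0 < ρ := by rw [hρ]; positivity
  rcases eq_or_lt_of_le hmn with heq | hlt
  · rw [← heq]
    have h0 : ((m - m).toNat) = 0 := by omega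
    rw [h0, pow_zero]
    have := hpos m le_rfl hmn
    nlinarith
  -- m < n
  have hsplit : ∀ j : ℤ, j ≤ n → σ (j-1) = (h j)⁻¹ + σ j := by
    intro j hj
    rw [hσ]
    simp only []
    rw [show j - 1 + 1 = j by ring]
    have : Finset.Icc j n = insert j (Finset.Icc (j+1) n) := by
      ext i; simp only [Finset.mem_Icc, Finset.mem_insert]; omega
    rw [this, Finset.sum_insert (by simp only [Finset.mem_Icc]; omega)]
  have hσnonneg : ∀ j : ℤ, m - 1 ≤ j → 0 ≤ σ j := by
    intro j hj
    apply Finset.sum_nonneg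
    intro i hi
    rw [Finset.mem_Icc] at hi
    exact (inv_pos.mpr (hpos i (by omega) hi.2)).le
  have hstep : ∀ j : ℤ, m ≤ j → j ≤ n → σ j ≤ ρ * σ (j-1) := by
    intro j h1 h2
    have hs := hsplit j h2
    have hiq := hineq j h1 h2
    have hj := hpos j h1 h2
    have hinv : σ j / k ≤ (h j)⁻¹ := by
      rw [div_le_iff₀ hkpos]
      have h4 : σ j * h j ≤ k := hiq
      calc σ j = σ j * h j * (h j)⁻¹ := by field_simp
        _ ≤ k * (h j)⁻¹ := mul_le_mul_of_nonneg_right h4 (inv_nonneg.mpr hj.le)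
        _ = (h j)⁻¹ * k := by ring
    have hgrow : (1 + 1/k) * σ j ≤ σ (j-1) := by
      rw [hs]
      have : σ j / k ≤ (h j)⁻¹ := hinv
      calc (1 + 1/k) * σ j = σ j + σ j / k := by ring
        _ ≤ (h j)⁻¹ + σ j := by linarith
    have hcoef : ρ * (1 + 1/k) = 1 := by
      rw [hρ]; field_simp
    calc σ j = ρ * ((1 + 1/k) * σ j) := by rw [← mul_assoc, hcoef, one_mul]
      _ ≤ ρ * σ (j-1) := mul_le_mul_of_nonneg_left hgrow hρpos.le
  have hσn1 : σ (n-1) = (h n)⁻¹ := by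
    have h1 := hsplit n le_rfl
    have h2 : σ n = 0 := by
      rw [hσ]
      simp only []
      rw [Finset.Icc_eq_empty (by omega), Finset.sum_empty]
    rw [h1, h2, add_zero]
  have hind : ∀ i : ℕ, m ≤ n - 1 - (i:ℤ) → (h n)⁻¹ ≤ ρ ^ i * σ (n - 1 - (i:ℤ)) := by
    intro i
    induction i with
    | zero => intro _; simp [hσn1]
    | succ i ih =>
        intro hi
        have h1 : m ≤ n - 1 - (i:ℤ) := by push_cast at hi ⊢; omega
        have h2 := ih h1
        have h3 : σ (n - 1 - (i:ℤ)) ≤ ρ * σ (n - 1 - (i:ℤ) - 1) := by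
          exact hstep (n - 1 - (i:ℤ)) h1 (by omega)
        calc (h n)⁻¹ ≤ ρ ^ i * σ (n - 1 - (i:ℤ)) := h2
          _ ≤ ρ ^ i * (ρ * σ (n - 1 - (i:ℤ) - 1)) :=
              mul_le_mul_of_nonneg_left h3 (pow_nonneg hρpos.le i)
          _ = ρ ^ (i+1) * σ (n - 1 - ((i:ℕ)+1:ℕ)) := by
              push_cast
              ring_nf
  set i0 : ℕ := (n - 1 - m).toNat with hi0
  have hi0m : n - 1 - (i0:ℤ) = m := by omega
  have hfin := hind i0 (by omega)
  rw [hi0m] at hfin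
  have hσm : 0 < σ m := by
    have h1 : (h n)⁻¹ ≤ ρ ^ i0 * σ m := hfin
    have h2 : 0 < (h n)⁻¹ := inv_pos.mpr (hpos n hmn le_rfl)
    by_contra hcon
    push_neg at hcon
    nlinarith [pow_nonneg hρpos.le i0]
  have hiqm := hineq m le_rfl hmn
  have hhn := hpos n hmn le_rfl
  have hhm := hpos m le_rfl hmn
  have h1 : h m ≤ k / σ m := by
    rw [le_div_iff₀ hσm]
    calc h m * σ m = σ m * h m := by ring
      _ ≤ k := hiqm
  have h2 : 1 ≤ ρ ^ i0 * σ m * h n := by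
    calc (1:ℝ) = (h n)⁻¹ * h n := by field_simp
      _ ≤ (ρ ^ i0 * σ m) * h n := mul_le_mul_of_nonneg_right hfin hhn.le
  have h3 : k / σ m ≤ k * ρ ^ i0 * h n := by
    rw [div_le_iff₀ hσm]
    calc k = k * 1 := by ring
      _ ≤ k * (ρ ^ i0 * σ m * h n) := mul_le_mul_of_nonneg_left h2 hkpos.le
      _ = k * ρ ^ i0 * h n * σ m := by ring
  have hnm' : (n - m).toNat = i0 + 1 := by omega
  have hkey : k * ρ ^ i0 = (k+1) * ρ ^ (i0 + 1) := by
    have : (k+1) * ρ ^ (i0+1) = ((k+1) * ρ) * ρ ^ i0 := by ring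
    rw [this]
    have hc : (k+1) * ρ = k := by rw [hρ]; field_simp
    rw [hc]
  calc h m ≤ k / σ m := h1
    _ ≤ k * ρ ^ i0 * h n := h3
    _ = (k+1) * ρ ^ ((n-m).toNat) * h n := by rw [hnm', ← hkey]

namespace DichCtx

variable {H1 : Type u} {H2 : Type u} [NormedAddCommGroup H1] [NormedSpace ℝ H1]
  [NormedAddCommGroup H2] [NormedSpace ℝ H2] [CompleteSpace H1] [CompleteSpace H2]

/-! ### The exponential estimates -/

/-- The (adjusted) master constant. -/
def kB (c : DichCtx H1 H2) : ℝ := max c.kN 2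

/-- The decay rate of the induced dichotomy. -/
def rho (c : DichCtx H1 H2) : ℝ := c.kB / (c.kB + 1)

theorem kB_ge2 (c : DichCtx H1 H2) : 2 ≤ c.kB := le_max_right _ _
theorem kN_le_kB (c : DichCtx H1 H2) : c.kN ≤ c.kB := le_max_left _ _
theorem kB_pos (c : DichCtx H1 H2) : 0 < c.kB := lt_of_lt_of_le (by norm_num) c.kB_ge2
theorem rho_pos (c : DichCtx H1 H2) : 0 < c.rho := by
  rw [rho]
  have := c.kB_pos
  positivity
theorem rho_lt_one (c : DichCtx H1 H2) : c.rho < 1 := by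
  rw [rho]
  rw [div_lt_one (by linarith [c.kB_pos])]
  linarith

theorem back_zero (c : DichCtx H1 H2) {x : ℤ → H2} {n : ℤ} (hn : n ≤ 0)
    (hsol : ∀ j : ℤ, j ≤ n → x j = c.A22 (j-1) (x (j-1)))
    (hbdd : ∃ C : ℝ, ∀ j : ℤ, j ≤ n → ‖x j‖ ≤ C) {i : ℤ} (hi : i ≤ n) (hxi : x i = 0) :
    ∀ j : ℤ, j ≤ i → x j = 0 := by
  obtain ⟨C, hC⟩ := hbdd
  set X : ℤ → H2 := fun j => if j ≤ i then x j else 0 with hX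
  have hX0 : X 0 = 0 := by
    rw [hX]
    simp only []
    by_cases h : (0:ℤ) ≤ i
    · have : i = 0 := by omega
      rw [if_pos (by omega), ← this, hxi]
    · rw [if_neg (by omega)]
  have hXsol : ∀ j : ℤ, j ≤ 0 → X j = c.A22 (j-1) (X (j-1)) := by
    intro j hj
    rw [hX]
    simp only []
    rcases le_or_gt j i with h | h
    · rw [if_pos h, if_pos (by omega)]
      exact hsol j (le_trans h hi)
    · rcases eq_or_lt_of_le (by omega : i + 1 ≤ j) with h1 | h1
      · rw [if_neg (by omega), if_pos (by omega : j - 1 ≤ i), show j - 1 = i by omega, hxi,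
          map_zero]
      · rw [if_neg (by omega), if_neg (by omega), map_zero]
  have hXbdd : ∀ j : ℤ, j ≤ 0 → ‖X j‖ ≤ max C 0 := by
    intro j hj
    rw [hX]
    simp only []
    rcases le_or_gt j i with h | h
    · rw [if_pos h]; exact le_trans (hC j (le_trans h hi)) (le_max_left _ _)
    · rw [if_neg (by omega)]; simp
  have := c.huniq X hX0 ⟨max C 0, hXbdd⟩ hXsol
  intro j hj
  have h2 := this j (le_trans hj (le_trans hi hn))
  rw [hX] at h2
  simp only [if_pos hj] at h2
  exact h2

theorem bwd_decay (c : DichCtx H1 H2) {x : ℤ → H2} {n : ℤ} (hn : n ≤ 0)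
    (hsol : ∀ j : ℤ, j ≤ n → x j = c.A22 (j-1) (x (j-1)))
    (hbdd : ∃ C : ℝ, ∀ j : ℤ, j ≤ n → ‖x j‖ ≤ C) :
    ∀ m : ℤ, m ≤ n → ‖x m‖ ≤ (c.kB + 1) * c.rho ^ ((n - m).toNat) * ‖x n‖ := by
  intro m hm
  have hRHS0 : 0 ≤ (c.kB + 1) * c.rho ^ ((n - m).toNat) * ‖x n‖ :=
    mul_nonneg (mul_nonneg (by linarith [c.kB_pos]) (pow_nonneg c.rho_pos.le _))
      (norm_nonneg _)
  by_cases hzero : ∃ i : ℤ, m ≤ i ∧ i ≤ n ∧ x i = 0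
  · obtain ⟨i, hi1, hi2, hi3⟩ := hzero
    have := c.back_zero hn hsol hbdd hi2 hi3 m hi1
    rw [this, norm_zero]
    exact hRHS0
  · push_neg at hzero
    have hpos : ∀ i : ℤ, m ≤ i → i ≤ n → 0 < ‖x i‖ := by
      intro i h1 h2
      exact norm_pos_iff.mpr (hzero i h1 h2)
    obtain ⟨C, hC⟩ := hbdd
    have hC0 : 0 ≤ C := le_trans (norm_nonneg _) (hC n le_rfl)
    set f : ℤ → H2 := fun j => if m ≤ j ∧ j ≤ n then ‖x j‖⁻¹ • x j else 0 with hf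
    have hfb : ∀ j : ℤ, ‖f j‖ ≤ 1 := by
      intro j
      rw [hf]
      simp only []
      by_cases h : m ≤ j ∧ j ≤ n
      · rw [if_pos h, norm_smul, Real.norm_eq_abs,
          abs_of_pos (inv_pos.mpr (hpos j h.1 h.2)),
          inv_mul_cancel₀ (hpos j h.1 h.2).ne']
      · rw [if_neg h, norm_zero]; norm_num
    set σ : ℤ → ℝ := fun j => ∑ i ∈ Finset.Icc (max (j+1) m) n, ‖x i‖⁻¹ with hσdef
    have hσnonneg : ∀ j : ℤ, 0 ≤ σ j := by
      intro j
      apply Finset.sum_nonneg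
      intro i hi
      rw [Finset.mem_Icc] at hi
      exact (inv_pos.mpr (hpos i (by omega) hi.2)).le
    have hσn : σ n = 0 := by
      rw [hσdef]
      simp only []
      rw [show max (n+1) m = n+1 by omega, Finset.Icc_eq_empty (by omega), Finset.sum_empty]
    have hσrec : ∀ j : ℤ, j ≤ n →
        σ (j-1) = (if m ≤ j then ‖x j‖⁻¹ else 0) + σ j := by
      intro j hj
      rw [hσdef]
      simp only []
      by_cases h : m ≤ j
      · rw [if_pos h, show max (j-1+1) m = j by omega]
        have : Finset.Icc j n = insert j (Finset.Icc (j+1) n) := by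
          ext i; simp only [Finset.mem_Icc, Finset.mem_insert]; omega
        rw [this, Finset.sum_insert (by simp only [Finset.mem_Icc]; omega),
          show max (j+1) m = j + 1 by omega]
      · rw [if_neg h, zero_add, show max (j-1+1) m = m by omega, show max (j+1) m = m by omega]
    set w : ℤ → H2 := fun j => if j ≤ n then -(σ j • x j) else 0 with hw
    have hwn : w n = 0 := by
      rw [hw]
      simp only [if_pos le_rfl]
      rw [hσn, zero_smul, neg_zero]
    have hwsol : ∀ j : ℤ, j ≤ 0 → w j = c.A22 (j-1) (w (j-1)) + f j := by
      intro j hj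
      by_cases hjn : j ≤ n
      · have hw1 : w j = -(σ j • x j) := by rw [hw]; simp only [if_pos hjn]
        have hw2 : w (j-1) = -(σ (j-1) • x (j-1)) := by
          rw [hw]; simp only [if_pos (by omega : j - 1 ≤ n)]
        rw [hw1, hw2, map_neg, map_smul, ← hsol j hjn]
        rw [hσrec j hjn]
        have hfj : f j = (if m ≤ j then ‖x j‖⁻¹ else 0) • x j := by
          rw [hf]
          simp only []
          by_cases h : m ≤ j
          · rw [if_pos ⟨h, hjn⟩, if_pos h]
          · rw [if_neg (fun hc => h hc.1), if_neg h, zero_smul]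
        rw [hfj, add_smul]
        abel
      · have hw1 : w j = 0 := by rw [hw]; simp only [if_neg hjn]
        have hfj : f j = 0 := by
          rw [hf]; simp only []
          rw [if_neg (fun hc : m ≤ j ∧ j ≤ n => hjn hc.2)]
        rw [hw1, hfj, add_zero]
        rcases eq_or_lt_of_le (by omega : n ≤ j - 1) with h1 | h1
        · rw [← h1, hwn, map_zero]
        · have : w (j-1) = 0 := by rw [hw]; simp only [if_neg (by omega : ¬ j - 1 ≤ n)]
          rw [this, map_zero]
    have hw0Z : w 0 ∈ c.Z := by
      by_cases h : (0:ℤ) ≤ n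
      · have : n = 0 := by omega
        rw [← this, hwn]
        exact zero_mem _
      · have : w 0 = 0 := by rw [hw]; simp only [if_neg (by omega : ¬ (0:ℤ) ≤ n)]
        rw [this]
        exact zero_mem _
    have hS : ∀ j : ℤ, σ j ≤ ∑ i ∈ Finset.Icc m n, ‖x i‖⁻¹ := by
      intro j
      apply Finset.sum_le_sum_of_subset_of_nonneg
      · intro i hi
        rw [Finset.mem_Icc] at hi ⊢
        omega
      · intro i hi _
        rw [Finset.mem_Icc] at hi
        exact (inv_pos.mpr (hpos i hi.1 hi.2)).le
    have hwbdd : ∀ j : ℤ, j ≤ n → ‖w j‖ ≤ (∑ i ∈ Finset.Icc m n, ‖x i‖⁻¹) * C := by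
      intro j hj
      rw [hw]
      simp only [if_pos hj]
      rw [norm_neg, norm_smul, Real.norm_eq_abs, abs_of_nonneg (hσnonneg j)]
      exact mul_le_mul (hS j) (hC j hj) (norm_nonneg _)
        (Finset.sum_nonneg fun i hi => by
          rw [Finset.mem_Icc] at hi
          exact (inv_pos.mpr (hpos i hi.1 hi.2)).le)
    obtain ⟨C', hC'⟩ := bdd_neg w n ((∑ i ∈ Finset.Icc m n, ‖x i‖⁻¹) * C) hwbdd
      (mul_nonneg (Finset.sum_nonneg fun i hi => by
        rw [Finset.mem_Icc] at hi
        exact (inv_pos.mpr (hpos i hi.1 hi.2)).le) hC0)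
    have hWb := c.test_bound f 1 hfb w hwsol ⟨C', hC'⟩ hw0Z
    -- extract the Massera-Schäffer inequality
    have hineq : ∀ j : ℤ, m ≤ j → j ≤ n →
        (∑ i ∈ Finset.Icc (j+1) n, ‖x i‖⁻¹) * ‖x j‖ ≤ c.kB := by
      intro j h1 h2
      have h3 := hWb j (le_trans h2 hn)
      rw [hw] at h3
      simp only [if_pos h2] at h3
      rw [norm_neg, norm_smul, Real.norm_eq_abs, abs_of_nonneg (hσnonneg j)] at h3
      have h4 : σ j = ∑ i ∈ Finset.Icc (j+1) n, ‖x i‖⁻¹ := by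
        rw [hσdef]
        simp only []
        rw [show max (j+1) m = j + 1 by omega]
      rw [h4] at h3
      rw [mul_one] at h3
      exact le_trans h3 (le_trans c.kN_le_kB le_rfl)
    have := MS_bwd hm c.kB_ge2 hpos hineq
    exact this

theorem fwd_decay (c : DichCtx H1 H2) {n : ℤ} (hn : n ≤ 0) {v : H2} (hv : v ∈ c.Rset n) :
    ∀ m : ℤ, n ≤ m → m ≤ 0 →
      ‖Phi c.A22 m n v‖ ≤ c.kB * c.rho ^ ((m - n).toNat) * ‖v‖ := by
  intro m hnm hm0
  set x : ℤ → H2 := fun j => Phi c.A22 j n v with hx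
  have hxn : x n = v := by rw [hx]; simp only []; rw [Phi_self]; rfl
  have hxstep : ∀ j : ℤ, n < j → x j = c.A22 (j-1) (x (j-1)) := by
    intro j hj
    rw [hx]
    simp only []
    have := Phi_succ_apply c.A22 (show n ≤ j - 1 by omega) v
    rwa [show j - 1 + 1 = j by ring] at this
  have hRHS0 : 0 ≤ c.kB * c.rho ^ ((m - n).toNat) * ‖v‖ :=
    mul_nonneg (mul_nonneg c.kB_pos.le (pow_nonneg c.rho_pos.le _)) (norm_nonneg _)
  by_cases hzero : ∃ i : ℤ, n ≤ i ∧ i ≤ m ∧ x i = 0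
  · obtain ⟨i, hi1, hi2, hi3⟩ := hzero
    have : x m = Phi c.A22 m i (x i) := by
      rw [hx]
      simp only []
      rw [Phi_comp c.A22 hi1 hi2]
    have hxm : x m = 0 := by rw [this, hi3, map_zero]
    show ‖x m‖ ≤ _
    rw [hxm, norm_zero]
    exact hRHS0
  · push_neg at hzero
    have hpos : ∀ i : ℤ, n ≤ i → i ≤ m → 0 < ‖x i‖ := by
      intro i h1 h2
      exact norm_pos_iff.mpr (hzero i h1 h2)
    set f : ℤ → H2 := fun j => if n ≤ j ∧ j ≤ m then ‖x j‖⁻¹ • x j else 0 with hf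
    have hfb : ∀ j : ℤ, ‖f j‖ ≤ 1 := by
      intro j
      rw [hf]
      simp only []
      by_cases h : n ≤ j ∧ j ≤ m
      · rw [if_pos h, norm_smul, Real.norm_eq_abs,
          abs_of_pos (inv_pos.mpr (hpos j h.1 h.2)),
          inv_mul_cancel₀ (hpos j h.1 h.2).ne']
      · rw [if_neg h, norm_zero]; norm_num
    set σ : ℤ → ℝ := fun j => ∑ i ∈ Finset.Icc n (min j m), ‖x i‖⁻¹ with hσdef
    have hσnonneg : ∀ j : ℤ, n ≤ j → 0 ≤ σ j := by
      intro j hj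
      apply Finset.sum_nonneg
      intro i hi
      rw [Finset.mem_Icc] at hi
      exact (inv_pos.mpr (hpos i hi.1 (by omega))).le
    set w : ℤ → H2 := fun j => if n ≤ j then σ j • x j else 0 with hw
    have hwsol : ∀ j : ℤ, j ≤ 0 → w j = c.A22 (j-1) (w (j-1)) + f j := by
      intro j hj
      rcases lt_or_ge j n with h | h
      · have hw1 : w j = 0 := by rw [hw]; simp only [if_neg (by omega : ¬ n ≤ j)]
        have hw2 : w (j-1) = 0 := by rw [hw]; simp only [if_neg (by omega : ¬ n ≤ j - 1)]
        have hfj : f j = 0 := by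
          rw [hf]; simp only []
          rw [if_neg (fun hc : n ≤ j ∧ j ≤ m => by omega)]
        rw [hw1, hw2, hfj, map_zero, add_zero]
      · rcases eq_or_lt_of_le h with h1 | h1
        · -- j = n
          have hw1 : w j = σ j • x j := by rw [hw]; simp only [if_pos h]
          have hw2 : w (j-1) = 0 := by rw [hw]; simp only [if_neg (by omega : ¬ n ≤ j - 1)]
          have hσj : σ j = ‖x j‖⁻¹ := by
            rw [hσdef]
            simp only []
            rw [show min j m = j by omega, ← h1, Finset.Icc_self, Finset.sum_singleton]
          have hfj : f j = ‖x j‖⁻¹ • x j := by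
            rw [hf]; simp only []
            rw [if_pos ⟨h, by omega⟩]
          rw [hw1, hw2, hfj, map_zero, zero_add, hσj]
        · -- n < j
          have hw1 : w j = σ j • x j := by rw [hw]; simp only [if_pos h]
          have hw2 : w (j-1) = σ (j-1) • x (j-1) := by
            rw [hw]; simp only [if_pos (by omega : n ≤ j - 1)]
          rw [hw1, hw2, map_smul, ← hxstep j h1]
          rcases le_or_gt j m with h2 | h2
          · have hσj : σ j = σ (j-1) + ‖x j‖⁻¹ := by
              rw [hσdef]
              simp only []
              rw [show min j m = j by omega, show min (j-1) m = j - 1 by omega]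
              have : Finset.Icc n j = insert j (Finset.Icc n (j-1)) := by
                ext i; simp only [Finset.mem_Icc, Finset.mem_insert]; omega
              rw [this, Finset.sum_insert (by simp only [Finset.mem_Icc]; omega)]
              ring
            have hfj : f j = ‖x j‖⁻¹ • x j := by
              rw [hf]; simp only []
              rw [if_pos ⟨by omega, h2⟩]
            rw [hfj, hσj, add_smul]
          · have hσj : σ j = σ (j-1) := by
              rw [hσdef]
              simp only []
              rw [show min j m = m by omega, show min (j-1) m = m by omega]
            have hfj : f j = 0 := by
              rw [hf]; simp only []
              rw [if_neg (fun hc : n ≤ j ∧ j ≤ m => by omega)]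
            rw [hfj, hσj, add_zero]
    have hw0Z : w 0 ∈ c.Z := by
      have hw1 : w 0 = σ 0 • x 0 := by rw [hw]; simp only [if_pos hn]
      rw [hw1]
      apply Submodule.smul_mem
      exact hv
    have hwbdd : ∀ j : ℤ, j ≤ n → ‖w j‖ ≤ 1 := by
      intro j hj
      rcases lt_or_eq_of_le hj with h | h
      · rw [hw]; simp only [if_neg (by omega : ¬ n ≤ j)]; simp
      · subst h
        rw [hw]
        simp only [if_pos le_rfl]
        have hσj : σ j = ‖x j‖⁻¹ := by
          rw [hσdef]
          simp only []
          rw [show min j m = j by omega, Finset.Icc_self, Finset.sum_singleton]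
        rw [hσj, norm_smul, Real.norm_eq_abs,
          abs_of_pos (inv_pos.mpr (hpos j le_rfl hnm)),
          inv_mul_cancel₀ (hpos j le_rfl hnm).ne']
    obtain ⟨C', hC'⟩ := bdd_neg w n 1 hwbdd (by norm_num)
    have hWb := c.test_bound f 1 hfb w hwsol ⟨C', hC'⟩ hw0Z
    have hineq : ∀ j : ℤ, n ≤ j → j ≤ m →
        (∑ i ∈ Finset.Icc n j, ‖x i‖⁻¹) * ‖x j‖ ≤ c.kB := by
      intro j h1 h2
      have h3 := hWb j (le_trans h2 hm0)
      rw [hw] at h3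
      simp only [if_pos h1] at h3
      rw [norm_smul, Real.norm_eq_abs, abs_of_nonneg (hσnonneg j h1)] at h3
      have h4 : σ j = ∑ i ∈ Finset.Icc n j, ‖x i‖⁻¹ := by
        rw [hσdef]
        simp only []
        rw [show min j m = j by omega]
      rw [h4, mul_one] at h3
      exact le_trans h3 c.kN_le_kB
    have hMS := MS_fwd hnm c.kB_ge2 hpos hineq
    have hθρ : (1 - 1/c.kB) ≤ c.rho := by
      rw [rho]
      have hb := c.kB_pos
      have hb1 : (0:ℝ) < c.kB + 1 := by linarith
      rw [le_div_iff₀ hb1]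
      have h1 : (1 - 1/c.kB) * (c.kB + 1) = c.kB - 1/c.kB := by field_simp; ring
      rw [h1]
      have := one_div_pos.mpr hb
      linarith
    have hpow : (1 - 1/c.kB) ^ ((m-n).toNat) ≤ c.rho ^ ((m-n).toNat) := by
      apply pow_le_pow_left₀ _ hθρ
      have h2 : 1/c.kB ≤ 1/2 := by
        apply div_le_div_of_nonneg_left <;> linarith [c.kB_ge2]
      linarith
    calc ‖x m‖ ≤ c.kB * (1 - 1/c.kB) ^ ((m-n).toNat) * ‖x n‖ := hMS
      _ ≤ c.kB * c.rho ^ ((m-n).toNat) * ‖x n‖ := by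
          apply mul_le_mul_of_nonneg_right _ (norm_nonneg _)
          exact mul_le_mul_of_nonneg_left hpow c.kB_pos.le
      _ = c.kB * c.rho ^ ((m-n).toNat) * ‖v‖ := by rw [hxn]

/-! ### The dichotomy conditions for the block system -/

theorem cond_proj (c : DichCtx H1 H2) {n : ℤ} (hn : n ≤ 0) :
    (c.P2 n).comp (c.P2 n) = c.P2 n := by
  ext v
  show c.P2 n (c.P2 n v) = c.P2 n v
  exact c.P2_idem hn (c.P2_mem_Rset hn v)

theorem cond_comm (c : DichCtx H1 H2) {n : ℤ} (hn : n ≤ -1) :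
    (c.A22 n).comp (c.P2 n) = (c.P2 (n+1)).comp (c.A22 n) := by
  ext v
  show c.A22 n (c.P2 n v) = c.P2 (n+1) (c.A22 n v)
  have h1 : c.A22 n (c.P2 n v) ∈ c.Rset (n+1) :=
    c.Rset_step hn (c.P2_mem_Rset (by omega) v)
  have h2 : c.A22 n v - c.A22 n (c.P2 n v) ∈ Uset c.A22 (n+1) := by
    rw [← map_sub]
    have h3 := (c.P2fun_spec (show n ≤ 0 by omega) v).2
    have := Uset_step c.A22 (v := v - c.P2fun n v) h3
    exact this
  exact (c.P2fun_eq (by omega) h1 h2).symm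

theorem cond_bij (c : DichCtx H1 H2) {n : ℤ} (hn : n ≤ -1) :
    Set.BijOn (c.A22 n) {x : H2 | c.P2 n x = 0} {x : H2 | c.P2 (n+1) x = 0} := by
  have hn0 : n ≤ 0 := by omega
  have hn10 : n + 1 ≤ 0 := by omega
  refine ⟨?_, ?_, ?_⟩
  · intro x hx
    have hU : x ∈ Uset c.A22 n := (c.P2_zero_iff hn0 x).mp hx
    show c.P2 (n+1) (c.A22 n x) = 0
    exact (c.P2_zero_iff hn10 _).mpr (Uset_step c.A22 hU)
  · intro x hx y hy hxy
    have hUx : x ∈ Uset c.A22 n := (c.P2_zero_iff hn0 x).mp hx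
    have hUy : y ∈ Uset c.A22 n := (c.P2_zero_iff hn0 y).mp hy
    have hU : x - y ∈ Uset c.A22 n := Uset_sub c.A22 hUx hUy
    have hA : c.A22 n (x - y) = 0 := by rw [map_sub, hxy, sub_self]
    have hR : x - y ∈ c.Rset n := by
      show Phi c.A22 0 n (x - y) ∈ c.Z
      rw [← Phi_comp c.A22 (show n ≤ n+1 by omega) (show n+1 ≤ 0 by omega),
        Phi_one c.A22 n (x - y), hA, map_zero]
      exact zero_mem _
    have := c.U_cap_R hn0 hU hR
    exact sub_eq_zero.mp this
  · intro y hy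
    have hUy : y ∈ Uset c.A22 (n+1) := (c.P2_zero_iff hn10 y).mp hy
    obtain ⟨x, hx0, ⟨C, hC⟩, hsol⟩ := hUy
    have hmem : x n ∈ Uset c.A22 n :=
      ⟨x, rfl, ⟨C, fun k hk => hC k (by omega)⟩, fun k hk => hsol k (by omega)⟩
    refine ⟨x n, (c.P2_zero_iff hn0 _).mpr hmem, ?_⟩
    show c.A22 n (x n) = y
    have := hsol (n+1) le_rfl
    rw [show n + 1 - 1 = n by ring] at this
    rw [← this, hx0]

theorem cond_fwd (c : DichCtx H1 H2) {m n : ℤ} (hm : m ≤ 0) (hn : n ≤ 0) (hnm : n ≤ m) :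
    ‖(Phi c.A22 m n).comp (c.P2 n)‖ ≤ (c.kB * c.kN) * c.rho ^ ((m - n).toNat) := by
  apply ContinuousLinearMap.opNorm_le_bound
  · exact mul_nonneg (mul_nonneg c.kB_pos.le c.kN_pos.le) (pow_nonneg c.rho_pos.le _)
  intro v
  show ‖Phi c.A22 m n (c.P2 n v)‖ ≤ _
  calc ‖Phi c.A22 m n (c.P2 n v)‖
      ≤ c.kB * c.rho ^ ((m-n).toNat) * ‖c.P2 n v‖ :=
        c.fwd_decay hn (c.P2_mem_Rset hn v) m hnm hm
    _ ≤ c.kB * c.rho ^ ((m-n).toNat) * (c.kN * ‖v‖) := by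
        apply mul_le_mul_of_nonneg_left (c.P2fun_bound n v)
        exact mul_nonneg c.kB_pos.le (pow_nonneg c.rho_pos.le _)
    _ = (c.kB * c.kN) * c.rho ^ ((m-n).toNat) * ‖v‖ := by ring

theorem cond_bwd (c : DichCtx H1 H2) {m n : ℤ} (hm : m ≤ 0) (hn : n ≤ 0) (hmn : m ≤ n)
    (x y : H2) (hx : c.P2 m x = 0) (hy : Phi c.A22 n m x = y - c.P2 n y) :
    ‖x‖ ≤ ((c.kB + 1) * (1 + c.kN)) * c.rho ^ ((n - m).toNat) * ‖y‖ := by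
  have hUx : x ∈ Uset c.A22 m := (c.P2_zero_iff hm x).mp hx
  obtain ⟨s, hs0, ⟨C, hC⟩, hssol⟩ := hUx
  set X : ℤ → H2 := fun j => if j ≤ m then s j else Phi c.A22 j m x with hX
  have hXm : X m = x := by rw [hX]; simp only [if_pos le_rfl]; exact hs0
  have hXn : X n = Phi c.A22 n m x := by
    rcases eq_or_lt_of_le hmn with h | h
    · rw [hX]
      simp only [if_pos (by omega : n ≤ m)]
      rw [← h, Phi_self]
      show s m = x
      exact hs0
    · rw [hX]; simp only [if_neg (by omega : ¬ n ≤ m)]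
  have hXsol : ∀ j : ℤ, j ≤ n → X j = c.A22 (j-1) (X (j-1)) := by
    intro j hj
    rcases le_or_gt j m with h | h
    · rw [hX]; simp only [if_pos h, if_pos (by omega : j - 1 ≤ m)]
      exact hssol j h
    · rcases eq_or_lt_of_le (by omega : m + 1 ≤ j) with h1 | h1
      · rw [hX]
        simp only [if_neg (by omega : ¬ j ≤ m), if_pos (by omega : j - 1 ≤ m)]
        rw [show j - 1 = m by omega, hs0, ← h1]
        exact Phi_one c.A22 m x
      · rw [hX]
        simp only [if_neg (by omega : ¬ j ≤ m), if_neg (by omega : ¬ j - 1 ≤ m)]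
        have := Phi_succ_apply c.A22 (show m ≤ j - 1 by omega) x
        rwa [show j - 1 + 1 = j by ring] at this
  have hXbd : ∀ j : ℤ, j ≤ m → ‖X j‖ ≤ C := by
    intro j hj; rw [hX]; simp only [if_pos hj]; exact hC j hj
  obtain ⟨C', hC'⟩ := bdd_neg X m C hXbd (le_trans (norm_nonneg _) (hC m le_rfl))
  have hdecay := c.bwd_decay hn hXsol ⟨C', hC'⟩ m hmn
  rw [hXm, hXn, hy] at hdecay
  have hYb : ‖y - c.P2 n y‖ ≤ (1 + c.kN) * ‖y‖ := by
    calc ‖y - c.P2 n y‖ ≤ ‖y‖ + ‖c.P2 n y‖ := norm_sub_le _ _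
      _ ≤ ‖y‖ + c.kN * ‖y‖ := by
          have hb : ‖c.P2 n y‖ ≤ c.kN * ‖y‖ := c.P2fun_bound n y
          linarith
      _ = (1 + c.kN) * ‖y‖ := by ring
  calc ‖x‖ ≤ (c.kB + 1) * c.rho ^ ((n-m).toNat) * ‖y - c.P2 n y‖ := hdecay
    _ ≤ (c.kB + 1) * c.rho ^ ((n-m).toNat) * ((1 + c.kN) * ‖y‖) := by
        apply mul_le_mul_of_nonneg_left hYb
        exact mul_nonneg (by linarith [c.kB_pos]) (pow_nonneg c.rho_pos.le _)
    _ = ((c.kB + 1) * (1 + c.kN)) * c.rho ^ ((n-m).toNat) * ‖y‖ := by ring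

end DichCtx

theorem exp_neg_eq_pow {a : ℝ} {m n : ℤ} (h : n ≤ m) :
    Real.exp (-a * ((m : ℝ) - (n : ℝ))) = (Real.exp (-a)) ^ ((m - n).toNat) := by
  rw [← Real.exp_nat_mul]
  congr 1
  have h2 : (((m - n).toNat : ℤ) : ℝ) = (m : ℝ) - n := by
    have h4 : ((m - n).toNat : ℤ) = m - n := by omega
    rw [h4]; push_cast; ring
  have h3 : (((m - n).toNat : ℕ) : ℝ) = (m:ℝ) - n := by exact_mod_cast h2
  rw [h3]; ring

theorem exp_log_eq_pow {ρ : ℝ} (hρ : 0 < ρ) {m n : ℤ} (h : n ≤ m) :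
    Real.exp (-(-Real.log ρ) * ((m:ℝ) - (n:ℝ))) = ρ ^ ((m - n).toNat) := by
  rw [exp_neg_eq_pow h, neg_neg, Real.exp_log hρ]

theorem block2_dichotomy_of_triangular_Zminus {H1 : Type u} {H2 : Type u}
    [NormedAddCommGroup H1] [InnerProductSpace ℝ H1] [CompleteSpace H1]
    [NormedAddCommGroup H2] [InnerProductSpace ℝ H2] [CompleteSpace H2]
    (A11 : ℤ → H1 →L[ℝ] H1) (A12 : ℤ → H2 →L[ℝ] H1) (A22 : ℤ → H2 →L[ℝ] H2)
    (htri : ExpDichotomy {n : ℤ | n ≤ 0} {n : ℤ | n ≤ -1} (triangular A11 A12 A22))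
    (hU2 : IsComplementedSubspace (Uset A22 0))
    (huniq : ∀ x2 : ℤ → H2, x2 0 = 0 → (∃ C : ℝ, ∀ n : ℤ, n ≤ 0 → ‖x2 n‖ ≤ C) →
      (∀ n : ℤ, n ≤ 0 → x2 n = A22 (n - 1) (x2 (n - 1))) → ∀ n : ℤ, n ≤ 0 → x2 n = 0) :
    ExpDichotomy {n : ℤ | n ≤ 0} {n : ℤ | n ≤ -1} A22 := by
  classical
  obtain ⟨P, K, α, hK, hα, hproj, hcomm, hbij, hfwd, hbwd⟩ := htri
  obtain ⟨Z, hZc, hZd, hZs⟩ := hU2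
  have hr1 : Real.exp (-α) < 1 := by
    have h := Real.exp_lt_exp.mpr (show -α < 0 by linarith)
    rwa [Real.exp_zero] at h
  let c : DichCtx H1 H2 :=
    { A11 := A11, A12 := A12, A22 := A22, P := P, K := K, r := Real.exp (-α)
      hK := hK, hr0 := Real.exp_pos _, hr1 := hr1
      hproj := fun n hn v => by
        have h1 := ContinuousLinearMap.ext_iff.mp (hproj n hn) v
        exact h1
      hbij := fun n hn => hbij n hn
      hfwd := fun m n hm hn hnm v => by
        have h1 := hfwd m n hm hn hnm
        calc ‖Phi (triangular A11 A12 A22) m n (P n v)‖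
            ≤ ‖(Phi (triangular A11 A12 A22) m n).comp (P n)‖ * ‖v‖ :=
              ((Phi (triangular A11 A12 A22) m n).comp (P n)).le_opNorm v
          _ ≤ (K * Real.exp (-α * ((m:ℝ) - (n:ℝ)))) * ‖v‖ :=
              mul_le_mul_of_nonneg_right h1 (norm_nonneg v)
          _ = K * (Real.exp (-α)) ^ ((m - n).toNat) * ‖v‖ := by
              rw [exp_neg_eq_pow hnm]
      hbwd := fun m n hm hn hmn x y h1 h2 => by
        have h3 := hbwd m n hm hn hmn x y h1 h2
        rwa [exp_neg_eq_pow hmn] at h3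
      Z := Z, hZc := hZc, hZd := hZd, hZs := hZs, huniq := huniq }
  refine ⟨c.P2, c.kB * c.kN + (c.kB + 1) * (1 + c.kN), -Real.log c.rho, ?_, ?_, ?_, ?_, ?_, ?_, ?_⟩
  · have h1 := c.kB_pos
    have h2 := c.kN_pos
    nlinarith
  · have := Real.log_neg c.rho_pos c.rho_lt_one
    linarith
  · intro n hn
    exact c.cond_proj hn
  · intro n hn
    exact c.cond_comm hn
  · intro n hn
    exact c.cond_bij hn
  · intro m n hm hn hnm
    have hpow : Real.exp (-(-Real.log c.rho) * ((m:ℝ) - (n:ℝ))) = c.rho ^ ((m-n).toNat) :=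
      exp_log_eq_pow c.rho_pos hnm
    calc ‖(Phi A22 m n).comp (c.P2 n)‖
        ≤ (c.kB * c.kN) * c.rho ^ ((m-n).toNat) := c.cond_fwd hm hn hnm
      _ ≤ (c.kB * c.kN + (c.kB + 1) * (1 + c.kN)) * c.rho ^ ((m-n).toNat) := by
          apply mul_le_mul_of_nonneg_right _ (pow_nonneg c.rho_pos.le _)
          have h1 := c.kB_pos
          have h2 := c.kN_pos
          nlinarith
      _ = (c.kB * c.kN + (c.kB + 1) * (1 + c.kN)) *
          Real.exp (-(-Real.log c.rho) * ((m:ℝ) - (n:ℝ))) := by rw [hpow]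
  · intro m n hm hn hmn x y h1 h2
    have hpow : Real.exp (-(-Real.log c.rho) * ((n:ℝ) - (m:ℝ))) = c.rho ^ ((n-m).toNat) :=
      exp_log_eq_pow c.rho_pos hmn
    calc ‖x‖ ≤ ((c.kB + 1) * (1 + c.kN)) * c.rho ^ ((n-m).toNat) * ‖y‖ :=
          c.cond_bwd hm hn hmn x y h1 h2
      _ ≤ (c.kB * c.kN + (c.kB + 1) * (1 + c.kN)) * c.rho ^ ((n-m).toNat) * ‖y‖ := by
          apply mul_le_mul_of_nonneg_right _ (norm_nonneg y)
          apply mul_le_mul_of_nonneg_right _ (pow_nonneg c.rho_pos.le _)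
          have h3 := c.kB_pos
          have h4 := c.kN_pos
          nlinarith
      _ = (c.kB * c.kN + (c.kB + 1) * (1 + c.kN)) *
          Real.exp (-(-Real.log c.rho) * ((n:ℝ) - (m:ℝ))) * ‖y‖ := by rw [hpow]

end
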